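/- arXiv:1611.04559 — 3 statements merged into one kernel-verified Lean document; each statement's English description precedes it below -/
import Mathlib

section
/- For γ ∈ ℝ and integer n ≥ 1, let I_n = {z ∈ (n², (n+1)²) : |η(z)| ≤ 4}. Then: if γ > 0 there exists a_n with n² < a_n < (n+1)² such that I_n = [a_n, (n+1)²); if γ < 0 there exists b_n with n² < b_n < (n+1)² such that I_n = (n², b_n]; and if γ = 0 then I_n = (n², (n+1)²). In particular, for γ ≠ 0 the sets I_n and I_{n+1} are separated by a gap of positive length. -/
open Real

/-- The function `η(z) = γ sin(π√z)/√z + 4 cos(π√z)` for `z > 0`, `η(0) = γπ + 4`, and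
`η(z) = γ sinh(π√(−z))/√(−z) + 4 cosh(π√(−z))` for `z < 0`. -/
noncomputable def eta (γ z : ℝ) : ℝ :=
  if 0 < z then
    γ * Real.sin (π * Real.sqrt z) / Real.sqrt z + 4 * Real.cos (π * Real.sqrt z)
  else if z = 0 then γ * π + 4
  else γ * Real.sinh (π * Real.sqrt (-z)) / Real.sqrt (-z) + 4 * Real.cosh (π * Real.sqrt (-z))

lemma sqrt_mem_aux (n : ℕ) (hn : 1 ≤ n) {z : ℝ}
    (hz : z ∈ Set.Ioo ((n : ℝ) ^ 2) (((n : ℝ) + 1) ^ 2)) :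
    (n : ℝ) < Real.sqrt z ∧ Real.sqrt z < (n : ℝ) + 1 := by
  have hn0 : (0:ℝ) ≤ (n:ℝ) := Nat.cast_nonneg n
  constructor
  · rw [show (n:ℝ) = Real.sqrt ((n:ℝ)^2) by rw [Real.sqrt_sq hn0]]
    exact Real.sqrt_lt_sqrt (by positivity) hz.1
  · have h := Real.sqrt_lt_sqrt (le_of_lt (lt_of_le_of_lt (by positivity) hz.1)) hz.2
    rwa [Real.sqrt_sq (by linarith)] at h

lemma eta_abs_iff (γ : ℝ) (n : ℕ) (hn : 1 ≤ n) {z : ℝ}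
    (hz : z ∈ Set.Ioo ((n : ℝ) ^ 2) (((n : ℝ) + 1) ^ 2)) :
    |eta γ z| ≤ 4 ↔
      (γ * Real.cos (π * (Real.sqrt z - n) / 2) ≤
          4 * Real.sqrt z * Real.sin (π * (Real.sqrt z - n) / 2) ∧
       0 ≤ γ * Real.sin (π * (Real.sqrt z - n) / 2) +
          4 * Real.sqrt z * Real.cos (π * (Real.sqrt z - n) / 2)) := by
  have hn1 : (1:ℝ) ≤ (n:ℝ) := by exact_mod_cast hn
  obtain ⟨hs1, hs2⟩ := sqrt_mem_aux n hn hz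
  set s := Real.sqrt z with hsdef
  set u := π * (s - n) / 2 with hudef
  have hpi := pi_pos
  have hspos : 0 < s := by linarith
  have hz0 : 0 < z := lt_of_le_of_lt (by positivity) hz.1
  have hu1 : 0 < u := by rw [hudef]; have : 0 < s - (n:ℝ) := by linarith
                         positivity
  have hu2 : u < π / 2 := by
    rw [hudef]; rw [div_lt_div_iff₀ (by norm_num) (by norm_num)]
    nlinarith
  have hsin : 0 < Real.sin u := Real.sin_pos_of_pos_of_lt_pi hu1 (by linarith)
  have hcos : 0 < Real.cos u := Real.cos_pos_of_mem_Ioo ⟨by linarith, hu2⟩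
  have hcosn : Real.cos ((n:ℝ) * π) = (-1)^n := by
    simpa using Real.cos_nat_mul_pi_sub 0 n
  have hsin2 : Real.sin (π * s) = (-1)^n * Real.sin (2*u) := by
    rw [show π * s = (n:ℝ)*π + 2*u by rw [hudef]; ring, Real.sin_add,
      Real.sin_nat_mul_pi, hcosn]; ring
  have hcos2 : Real.cos (π * s) = (-1)^n * Real.cos (2*u) := by
    rw [show π * s = (n:ℝ)*π + 2*u by rw [hudef]; ring, Real.cos_add,
      Real.sin_nat_mul_pi, hcosn]; ring
  have heta : eta γ z = (-1:ℝ)^n * (γ * Real.sin (2*u) / s + 4 * Real.cos (2*u)) := by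
    rw [eta, if_pos hz0, ← hsdef, hsin2, hcos2]; ring
  have habs : |eta γ z| = |γ * Real.sin (2*u) / s + 4 * Real.cos (2*u)| := by
    rw [heta, abs_mul, abs_pow, abs_neg, abs_one, one_pow, one_mul]
  rw [habs, abs_le]
  set E := γ * Real.sin (2*u) / s + 4 * Real.cos (2*u) with hEdef
  have hs0 : s ≠ 0 := ne_of_gt hspos
  have pyth := Real.sin_sq_add_cos_sq u
  have hE1 : s * E - 4 * s = 2 * Real.sin u * (γ * Real.cos u - 4 * s * Real.sin u) := by
    rw [hEdef, Real.sin_two_mul, Real.cos_two_mul]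
    field_simp
    nlinarith [pyth]
  have hE2 : s * E + 4 * s = 2 * Real.cos u * (γ * Real.sin u + 4 * s * Real.cos u) := by
    rw [hEdef, Real.sin_two_mul, Real.cos_two_mul]
    field_simp
    nlinarith [pyth]
  clear_value s u E
  clear heta habs hsin2 hcos2 hcosn hEdef hsdef hudef hz hz0
  constructor
  · rintro ⟨h1, h2⟩
    have p2 : s * E ≤ s * 4 := mul_le_mul_of_nonneg_left h2 hspos.le
    have p1 : s * (-4) ≤ s * E := mul_le_mul_of_nonneg_left h1 hspos.le
    constructor
    · by_contra hc
      push_neg at hc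
      linarith [mul_pos hsin (sub_pos.mpr hc)]
    · by_contra hc
      push_neg at hc
      linarith [mul_pos hcos (neg_pos.mpr hc)]
  · rintro ⟨h1, h2⟩
    have q1 : 0 ≤ 2 * Real.sin u * (4 * s * Real.sin u - γ * Real.cos u) :=
      mul_nonneg (by positivity) (by linarith)
    have q2 : 0 ≤ 2 * Real.cos u * (γ * Real.sin u + 4 * s * Real.cos u) :=
      mul_nonneg (by positivity) h2
    constructor
    · by_contra hc
      push_neg at hc
      linarith [mul_pos hspos (show (0:ℝ) < -4 - E by linarith)]
    · by_contra hc
      push_neg at hc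
      linarith [mul_pos hspos (show (0:ℝ) < E - 4 by linarith)]

noncomputable def Ffun (n : ℕ) (z : ℝ) : ℝ :=
  4 * Real.sqrt z * Real.tan (π * (Real.sqrt z - n) / 2)

noncomputable def Hfun (γ : ℝ) (n : ℕ) (z : ℝ) : ℝ :=
  -γ * (Real.tan (π * (Real.sqrt z - n) / 2) / Real.sqrt z)

lemma Fmono (n : ℕ) (hn : 1 ≤ n) :
    StrictMonoOn (Ffun n) (Set.Ioo ((n : ℝ) ^ 2) (((n : ℝ) + 1) ^ 2)) := by
  have hn1 : (1:ℝ) ≤ (n:ℝ) := by exact_mod_cast hn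
  have hpi := pi_pos
  intro z1 h1 z2 h2 hlt
  unfold Ffun
  obtain ⟨ha1, ha2⟩ := sqrt_mem_aux n hn h1
  obtain ⟨hb1, hb2⟩ := sqrt_mem_aux n hn h2
  set s1 := Real.sqrt z1
  set s2 := Real.sqrt z2
  have hslt : s1 < s2 := Real.sqrt_lt_sqrt (le_of_lt (lt_of_le_of_lt (by positivity) h1.1)) hlt
  set u1 := π * (s1 - n) / 2 with hu1def
  set u2 := π * (s2 - n) / 2 with hu2def
  have hu1a : 0 < u1 := by rw [hu1def]; have : 0 < s1 - (n:ℝ) := by linarith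
                           positivity
  have hu2a : 0 < u2 := by rw [hu2def]; have : 0 < s2 - (n:ℝ) := by linarith
                           positivity
  have hu1b : u1 < π / 2 := by
    rw [hu1def, div_lt_div_iff₀ (by norm_num) (by norm_num)]; nlinarith
  have hu2b : u2 < π / 2 := by
    rw [hu2def, div_lt_div_iff₀ (by norm_num) (by norm_num)]; nlinarith
  have hult : u1 < u2 := by rw [hu1def, hu2def]; nlinarith
  have htlt : Real.tan u1 < Real.tan u2 :=
    Real.strictMonoOn_tan ⟨by linarith, hu1b⟩ ⟨by linarith, hu2b⟩ hult
  have ht1 : 0 < Real.tan u1 := Real.tan_pos_of_pos_of_lt_pi_div_two hu1a hu1b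
  have hs1pos : 0 < s1 := by linarith
  nlinarith

lemma gmono_s (n : ℕ) (hn : 1 ≤ n) :
    StrictMonoOn (fun s => Real.tan (π * (s - n) / 2) / s) (Set.Ioo (n : ℝ) ((n : ℝ) + 1)) := by
  have hn1 : (1:ℝ) ≤ (n:ℝ) := by exact_mod_cast hn
  have hpi := pi_pos
  have key : ∀ s ∈ Set.Ioo (n : ℝ) ((n : ℝ) + 1),
      HasDerivAt (fun s => Real.tan (π * (s - n) / 2) / s)
        ((1 / Real.cos (π * (s - n) / 2) ^ 2 * (π * 1 / 2) * s
          - Real.tan (π * (s - n) / 2) * 1) / s ^ 2) s := by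
    intro s hs
    have hspos : 0 < s := by have := hs.1; linarith
    have hu1 : 0 < π * (s - n) / 2 := by have : 0 < s - (n:ℝ) := by have := hs.1; linarith
                                         positivity
    have hu2 : π * (s - n) / 2 < π / 2 := by
      rw [div_lt_div_iff₀ (by norm_num) (by norm_num)]
      have := hs.2; nlinarith
    have hcos : 0 < Real.cos (π * (s - n) / 2) :=
      Real.cos_pos_of_mem_Ioo ⟨by linarith, hu2⟩
    have hinner : HasDerivAt (fun s : ℝ => π * (s - n) / 2) (π * 1 / 2) s :=
      (((hasDerivAt_id s).sub_const (n:ℝ)).const_mul π).div_const 2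
    have htan : HasDerivAt (fun s : ℝ => Real.tan (π * (s - n) / 2))
        (1 / Real.cos (π * (s - n) / 2) ^ 2 * (π * 1 / 2)) s :=
      by have h := (Real.hasDerivAt_tan hcos.ne').comp s hinner; exact h
    exact htan.div (hasDerivAt_id s) hspos.ne'
  apply strictMonoOn_of_deriv_pos (convex_Ioo _ _)
  · intro s hs
    exact ((key s hs).continuousAt).continuousWithinAt
  · intro s hs
    rw [interior_Ioo] at hs
    rw [(key s hs).deriv]
    have hspos : 0 < s := by have := hs.1; linarith
    have hu1 : 0 < π * (s - n) / 2 := by have : 0 < s - (n:ℝ) := by have := hs.1; linarith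
                                         positivity
    have hu2 : π * (s - n) / 2 < π / 2 := by
      rw [div_lt_div_iff₀ (by norm_num) (by norm_num)]
      have := hs.2; nlinarith
    have hcos : 0 < Real.cos (π * (s - n) / 2) :=
      Real.cos_pos_of_mem_Ioo ⟨by linarith, hu2⟩
    have hsin : 0 < Real.sin (π * (s - n) / 2) :=
      Real.sin_pos_of_pos_of_lt_pi hu1 (by linarith)
    apply div_pos _ (by positivity)
    rw [Real.tan_eq_sin_div_cos]
    rw [show 1 / Real.cos (π * (s - n) / 2) ^ 2 * (π * 1 / 2) * s
        - Real.sin (π * (s - n) / 2) / Real.cos (π * (s - n) / 2) * 1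
        = (π / 2 * s - Real.sin (π * (s - n) / 2) * Real.cos (π * (s - n) / 2))
          / Real.cos (π * (s - n) / 2) ^ 2 by field_simp]
    apply div_pos _ (by positivity)
    have h1 : Real.sin (π * (s - n) / 2) ≤ 1 := Real.sin_le_one _
    have h2 : Real.cos (π * (s - n) / 2) ≤ 1 := Real.cos_le_one _
    have := hs.1
    nlinarith [pi_gt_three]

lemma Hmono (γ : ℝ) (hγ : γ < 0) (n : ℕ) (hn : 1 ≤ n) :
    StrictMonoOn (Hfun γ n) (Set.Ioo ((n : ℝ) ^ 2) (((n : ℝ) + 1) ^ 2)) := by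
  intro z1 h1 z2 h2 hlt
  unfold Hfun
  have hs1 := sqrt_mem_aux n hn h1
  have hs2 := sqrt_mem_aux n hn h2
  have hg := gmono_s n hn ⟨hs1.1, hs1.2⟩ ⟨hs2.1, hs2.2⟩
    (Real.sqrt_lt_sqrt (le_of_lt (lt_of_le_of_lt (by positivity) h1.1)) hlt)
  simp only at hg
  have : 0 < -γ := by linarith
  exact mul_lt_mul_of_pos_left hg this

lemma contTan (n : ℕ) (hn : 1 ≤ n) {w : ℝ} (hw2 : w < ((n : ℝ) + 1) ^ 2) :
    ContinuousOn (fun z => Real.tan (π * (Real.sqrt z - n) / 2)) (Set.Icc ((n : ℝ) ^ 2) w) := by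
  have hn1 : (1:ℝ) ≤ (n:ℝ) := by exact_mod_cast hn
  have hpi := pi_pos
  intro z hz
  apply ContinuousAt.continuousWithinAt
  have hzn : (n:ℝ) ≤ Real.sqrt z := by
    rw [show (n:ℝ) = Real.sqrt ((n:ℝ)^2) by rw [Real.sqrt_sq (by positivity)]]
    exact Real.sqrt_le_sqrt hz.1
  have hzlt : Real.sqrt z < (n:ℝ) + 1 := by
    have h1 : Real.sqrt z ≤ Real.sqrt w := Real.sqrt_le_sqrt hz.2
    have h2 : Real.sqrt w < Real.sqrt (((n:ℝ)+1)^2) := by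
      apply Real.sqrt_lt_sqrt _ hw2
      exact le_trans (le_trans (by positivity) hz.1) hz.2
    rw [Real.sqrt_sq (by linarith)] at h2
    linarith
  have hu2 : π * (Real.sqrt z - n) / 2 < π / 2 := by
    rw [div_lt_div_iff₀ (by norm_num) (by norm_num)]; nlinarith
  have hcos : 0 < Real.cos (π * (Real.sqrt z - n) / 2) := by
    apply Real.cos_pos_of_mem_Ioo
    constructor
    · have : 0 ≤ Real.sqrt z - (n:ℝ) := by linarith
      nlinarith
    · exact hu2
  have hinner : ContinuousAt (fun z : ℝ => π * (Real.sqrt z - (n:ℝ)) / 2) z := by fun_prop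
  have htan : ContinuousAt Real.tan (π * (Real.sqrt z - (n:ℝ)) / 2) :=
    Real.continuousAt_tan.2 hcos.ne'
  exact ContinuousAt.comp (g := Real.tan) (f := fun z : ℝ => π * (Real.sqrt z - (n:ℝ)) / 2) htan hinner

lemma contF (n : ℕ) (hn : 1 ≤ n) {w : ℝ} (hw2 : w < ((n : ℝ) + 1) ^ 2) :
    ContinuousOn (Ffun n) (Set.Icc ((n : ℝ) ^ 2) w) := by
  unfold Ffun
  exact ((continuous_const.mul Real.continuous_sqrt).continuousOn).mul (contTan n hn hw2)

lemma contH (γ : ℝ) (n : ℕ) (hn : 1 ≤ n) {w : ℝ} (hw2 : w < ((n : ℝ) + 1) ^ 2) :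
    ContinuousOn (Hfun γ n) (Set.Icc ((n : ℝ) ^ 2) w) := by
  have hn1 : (1:ℝ) ≤ (n:ℝ) := by exact_mod_cast hn
  unfold Hfun
  apply ContinuousOn.mul continuousOn_const
  apply ContinuousOn.div (contTan n hn hw2) (Real.continuous_sqrt.continuousOn)
  intro z hz
  have : (1:ℝ) ≤ Real.sqrt z := by
    rw [show (1:ℝ) = Real.sqrt 1 by simp]
    apply Real.sqrt_le_sqrt
    nlinarith [hz.1]
  positivity

lemma trig_facts (n : ℕ) (hn : 1 ≤ n) {z : ℝ}
    (hz : z ∈ Set.Ioo ((n : ℝ) ^ 2) (((n : ℝ) + 1) ^ 2)) :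
    0 < Real.sqrt z ∧ 0 < Real.sin (π * (Real.sqrt z - n) / 2) ∧
      0 < Real.cos (π * (Real.sqrt z - n) / 2) := by
  have hn1 : (1:ℝ) ≤ (n:ℝ) := by exact_mod_cast hn
  have hpi := pi_pos
  obtain ⟨hs1, hs2⟩ := sqrt_mem_aux n hn hz
  have hu1 : 0 < π * (Real.sqrt z - n) / 2 := by
    have : 0 < Real.sqrt z - (n:ℝ) := by linarith
    positivity
  have hu2 : π * (Real.sqrt z - n) / 2 < π / 2 := by
    rw [div_lt_div_iff₀ (by norm_num) (by norm_num)]; nlinarith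
  exact ⟨by linarith, Real.sin_pos_of_pos_of_lt_pi hu1 (by linarith),
    Real.cos_pos_of_mem_Ioo ⟨by linarith, hu2⟩⟩

lemma F_at_sq (n : ℕ) : Ffun n ((n:ℝ)^2) = 0 := by
  unfold Ffun
  rw [Real.sqrt_sq (Nat.cast_nonneg n)]
  simp

lemma H_at_sq (γ : ℝ) (n : ℕ) : Hfun γ n ((n:ℝ)^2) = 0 := by
  unfold Hfun
  rw [Real.sqrt_sq (Nat.cast_nonneg n)]
  simp

lemma cosF_id (n : ℕ) (hn : 1 ≤ n) {z : ℝ}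
    (hz : z ∈ Set.Ioo ((n : ℝ) ^ 2) (((n : ℝ) + 1) ^ 2)) :
    Real.cos (π * (Real.sqrt z - n) / 2) * Ffun n z
      = 4 * Real.sqrt z * Real.sin (π * (Real.sqrt z - n) / 2) := by
  obtain ⟨hspos, hsin, hcos⟩ := trig_facts n hn hz
  unfold Ffun
  rw [Real.tan_eq_sin_div_cos]
  field_simp

lemma cosH_id (γ : ℝ) (n : ℕ) (hn : 1 ≤ n) {z : ℝ}
    (hz : z ∈ Set.Ioo ((n : ℝ) ^ 2) (((n : ℝ) + 1) ^ 2)) :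
    Real.sqrt z * Real.cos (π * (Real.sqrt z - n) / 2) * (4 - Hfun γ n z)
      = γ * Real.sin (π * (Real.sqrt z - n) / 2)
        + 4 * Real.sqrt z * Real.cos (π * (Real.sqrt z - n) / 2) := by
  obtain ⟨hspos, hsin, hcos⟩ := trig_facts n hn hz
  unfold Hfun
  rw [Real.tan_eq_sin_div_cos]
  field_simp
  ring

lemma bandA (γ : ℝ) (hγ : 0 < γ) (n : ℕ) (hn : 1 ≤ n) :
    ∃ a : ℝ, (n : ℝ) ^ 2 < a ∧ a < ((n : ℝ) + 1) ^ 2 ∧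
      {z : ℝ | z ∈ Set.Ioo ((n : ℝ) ^ 2) (((n : ℝ) + 1) ^ 2) ∧ |eta γ z| ≤ 4}
        = Set.Ico a (((n : ℝ) + 1) ^ 2) := by
  have hn1 : (1:ℝ) ≤ (n:ℝ) := by exact_mod_cast hn
  have hpi := pi_pos
  set x := max γ 1 with hxdef
  have hx1 : (1:ℝ) ≤ x := le_max_right _ _
  have hxγ : γ ≤ x := le_max_left _ _
  set u₀ := Real.arctan x with hu0def
  have hu0a : 0 < u₀ := by
    rw [hu0def, ← Real.arctan_zero]
    exact Real.arctan_strictMono (by linarith)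
  have hu0b : u₀ < π / 2 := Real.arctan_lt_pi_div_two x
  set s₀ := (n:ℝ) + 2 * u₀ / π with hs0def
  have hs0a : (n:ℝ) < s₀ := by rw [hs0def]; have : 0 < 2 * u₀ / π := by positivity
                               linarith
  have hs0b : s₀ < (n:ℝ) + 1 := by
    rw [hs0def]
    have : 2 * u₀ / π < 1 := by rw [div_lt_one hpi]; linarith
    linarith
  set w := s₀ ^ 2 with hwdef
  have hw1 : (n:ℝ)^2 < w := by rw [hwdef]; nlinarith
  have hw2 : w < ((n:ℝ)+1)^2 := by rw [hwdef]; nlinarith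
  have hsqw : Real.sqrt w = s₀ := by rw [hwdef, Real.sqrt_sq (by linarith)]
  have hFw : Ffun n w = 4 * s₀ * x := by
    unfold Ffun
    rw [hsqw, show π * (s₀ - n) / 2 = u₀ by rw [hs0def]; field_simp; ring,
      hu0def, Real.tan_arctan]
  have hFwγ : γ ≤ Ffun n w := by rw [hFw]; nlinarith
  have hivt := intermediate_value_Icc (le_of_lt hw1) (contF n hn hw2)
  obtain ⟨a, haIcc, haF⟩ := hivt (show γ ∈ Set.Icc (Ffun n ((n:ℝ)^2)) (Ffun n w) by
    rw [F_at_sq n]; exact ⟨hγ.le, hFwγ⟩)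
  have ha1 : (n:ℝ)^2 < a := by
    rcases lt_or_eq_of_le haIcc.1 with h | h
    · exact h
    · exfalso; rw [← h, F_at_sq n] at haF; linarith
  have ha2 : a < ((n:ℝ)+1)^2 := lt_of_le_of_lt haIcc.2 hw2
  have haIoo : a ∈ Set.Ioo ((n:ℝ)^2) (((n:ℝ)+1)^2) := ⟨ha1, ha2⟩
  refine ⟨a, ha1, ha2, ?_⟩
  ext z
  simp only [Set.mem_setOf_eq, Set.mem_Ico]
  constructor
  · rintro ⟨hzIoo, habs⟩
    refine ⟨?_, hzIoo.2⟩
    obtain ⟨hc1, _⟩ := (eta_abs_iff γ n hn hzIoo).mp habs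
    obtain ⟨hspos, hsin, hcos⟩ := trig_facts n hn hzIoo
    have hid := cosF_id n hn hzIoo
    have hFz : γ ≤ Ffun n z := by
      have h' : Real.cos (π * (Real.sqrt z - n) / 2) * γ
          ≤ Real.cos (π * (Real.sqrt z - n) / 2) * Ffun n z := by
        rw [hid]; linarith
      exact le_of_mul_le_mul_left h' hcos
    by_contra hc
    push_neg at hc
    have := Fmono n hn hzIoo haIoo hc
    rw [haF] at this
    linarith
  · rintro ⟨haz, hz2⟩
    have hzIoo : z ∈ Set.Ioo ((n:ℝ)^2) (((n:ℝ)+1)^2) := ⟨lt_of_lt_of_le ha1 haz, hz2⟩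
    obtain ⟨hspos, hsin, hcos⟩ := trig_facts n hn hzIoo
    have hid := cosF_id n hn hzIoo
    have hFz : γ ≤ Ffun n z := by
      rcases lt_or_eq_of_le haz with h | h
      · have := Fmono n hn haIoo hzIoo h
        rw [haF] at this; exact this.le
      · rw [← h, haF]
    refine ⟨hzIoo, (eta_abs_iff γ n hn hzIoo).mpr ⟨?_, ?_⟩⟩
    · have := mul_le_mul_of_nonneg_left hFz hcos.le
      linarith
    · have h1 := mul_pos hγ hsin
      have h2 := mul_pos hspos hcos
      linarith

lemma bandB (γ : ℝ) (hγ : γ < 0) (n : ℕ) (hn : 1 ≤ n) :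
    ∃ b : ℝ, (n : ℝ) ^ 2 < b ∧ b < ((n : ℝ) + 1) ^ 2 ∧
      {z : ℝ | z ∈ Set.Ioo ((n : ℝ) ^ 2) (((n : ℝ) + 1) ^ 2) ∧ |eta γ z| ≤ 4}
        = Set.Ioc ((n : ℝ) ^ 2) b := by
  have hn1 : (1:ℝ) ≤ (n:ℝ) := by exact_mod_cast hn
  have hpi := pi_pos
  have hγ' : 0 < -γ := by linarith
  set x := max (4 * ((n:ℝ) + 1) / (-γ)) 1 with hxdef
  have hx1 : (1:ℝ) ≤ x := le_max_right _ _
  have hxγ : 4 * ((n:ℝ) + 1) / (-γ) ≤ x := le_max_left _ _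
  set u₀ := Real.arctan x with hu0def
  have hu0a : 0 < u₀ := by
    rw [hu0def, ← Real.arctan_zero]
    exact Real.arctan_strictMono (by linarith)
  have hu0b : u₀ < π / 2 := Real.arctan_lt_pi_div_two x
  set s₀ := (n:ℝ) + 2 * u₀ / π with hs0def
  have hs0a : (n:ℝ) < s₀ := by rw [hs0def]; have : 0 < 2 * u₀ / π := by positivity
                               linarith
  have hs0b : s₀ < (n:ℝ) + 1 := by
    rw [hs0def]
    have : 2 * u₀ / π < 1 := by rw [div_lt_one hpi]; linarith
    linarith
  set w := s₀ ^ 2 with hwdef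
  have hw1 : (n:ℝ)^2 < w := by rw [hwdef]; nlinarith
  have hw2 : w < ((n:ℝ)+1)^2 := by rw [hwdef]; nlinarith
  have hsqw : Real.sqrt w = s₀ := by rw [hwdef, Real.sqrt_sq (by linarith)]
  have hHw : Hfun γ n w = -γ * (x / s₀) := by
    unfold Hfun
    rw [hsqw, show π * (s₀ - n) / 2 = u₀ by rw [hs0def]; field_simp; ring,
      hu0def, Real.tan_arctan]
  have hHw4 : 4 ≤ Hfun γ n w := by
    rw [hHw]
    have hγx : 4 * ((n:ℝ) + 1) ≤ -γ * x := by
      have := mul_le_mul_of_nonneg_left hxγ hγ'.le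
      rwa [mul_div_cancel₀ _ (ne_of_gt hγ')] at this
    rw [mul_div_assoc']
    rw [le_div_iff₀ (by linarith)]
    nlinarith
  have hivt := intermediate_value_Icc (le_of_lt hw1) (contH γ n hn hw2)
  obtain ⟨b, hbIcc, hbH⟩ := hivt (show (4:ℝ) ∈ Set.Icc (Hfun γ n ((n:ℝ)^2)) (Hfun γ n w) by
    rw [H_at_sq γ n]; exact ⟨by norm_num, hHw4⟩)
  have hb1 : (n:ℝ)^2 < b := by
    rcases lt_or_eq_of_le hbIcc.1 with h | h
    · exact h
    · exfalso; rw [← h, H_at_sq γ n] at hbH; linarith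
  have hb2 : b < ((n:ℝ)+1)^2 := lt_of_le_of_lt hbIcc.2 hw2
  have hbIoo : b ∈ Set.Ioo ((n:ℝ)^2) (((n:ℝ)+1)^2) := ⟨hb1, hb2⟩
  refine ⟨b, hb1, hb2, ?_⟩
  ext z
  simp only [Set.mem_setOf_eq, Set.mem_Ioc]
  constructor
  · rintro ⟨hzIoo, habs⟩
    refine ⟨hzIoo.1, ?_⟩
    obtain ⟨_, hc2⟩ := (eta_abs_iff γ n hn hzIoo).mp habs
    obtain ⟨hspos, hsin, hcos⟩ := trig_facts n hn hzIoo
    have hid := cosH_id γ n hn hzIoo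
    have hHz : Hfun γ n z ≤ 4 := by
      by_contra hc
      push_neg at hc
      have hneg : Real.sqrt z * Real.cos (π * (Real.sqrt z - n) / 2) * (4 - Hfun γ n z) < 0 :=
        mul_neg_of_pos_of_neg (by positivity) (by linarith)
      linarith
    by_contra hc
    push_neg at hc
    have := Hmono γ hγ n hn hbIoo hzIoo hc
    rw [hbH] at this
    linarith
  · rintro ⟨hz1, hzb⟩
    have hzIoo : z ∈ Set.Ioo ((n:ℝ)^2) (((n:ℝ)+1)^2) := ⟨hz1, lt_of_le_of_lt hzb hb2⟩
    obtain ⟨hspos, hsin, hcos⟩ := trig_facts n hn hzIoo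
    have hid := cosH_id γ n hn hzIoo
    have hHz : Hfun γ n z ≤ 4 := by
      rcases lt_or_eq_of_le hzb with h | h
      · have := Hmono γ hγ n hn hzIoo hbIoo h
        rw [hbH] at this; exact this.le
      · rw [h, hbH]
    refine ⟨hzIoo, (eta_abs_iff γ n hn hzIoo).mpr ⟨?_, ?_⟩⟩
    · have h1 := mul_pos hspos hsin
      have h2 : γ * Real.cos (π * (Real.sqrt z - n) / 2) ≤ 0 :=
        mul_nonpos_of_nonpos_of_nonneg hγ.le hcos.le
      linarith
    · have hpos : 0 ≤ Real.sqrt z * Real.cos (π * (Real.sqrt z - n) / 2) * (4 - Hfun γ n z) :=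
        mul_nonneg (by positivity) (by linarith)
      linarith

/-- `I_m = {z ∈ (m², (m+1)²) : |η(z)| ≤ 4}`. -/
noncomputable def bandSet (γ : ℝ) (m : ℕ) : Set ℝ :=
  {z : ℝ | z ∈ Set.Ioo ((m : ℝ) ^ 2) (((m : ℝ) + 1) ^ 2) ∧ |eta γ z| ≤ 4}

lemma bandC (n : ℕ) (hn : 1 ≤ n) :
    bandSet 0 n = Set.Ioo ((n : ℝ) ^ 2) (((n : ℝ) + 1) ^ 2) := by
  have hn1 : (1:ℝ) ≤ (n:ℝ) := by exact_mod_cast hn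
  ext z
  simp only [bandSet, Set.mem_setOf_eq]
  constructor
  · exact fun h => h.1
  · intro h
    refine ⟨h, ?_⟩
    have hz0 : 0 < z := lt_of_le_of_lt (by positivity) h.1
    rw [eta, if_pos hz0]
    norm_num
    rw [abs_le]
    constructor <;>
      nlinarith [Real.neg_one_le_cos (π * Real.sqrt z), Real.cos_le_one (π * Real.sqrt z)]

/-- For `n ≥ 1`: if `γ > 0` then `I_n = [a_n, (n+1)²)` with
`n² < a_n < (n+1)²`; if `γ < 0` then `I_n = (n², b_n]` with `n² < b_n < (n+1)²`; if `γ = 0`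
then `I_n = (n², (n+1)²)`. In particular, for `γ ≠ 0` the sets `I_n` and `I_{n+1}` are
separated by a gap of positive length. -/
theorem bandSet_structure (γ : ℝ) (n : ℕ) (hn : 1 ≤ n) :
    (0 < γ → ∃ a : ℝ, (n : ℝ) ^ 2 < a ∧ a < ((n : ℝ) + 1) ^ 2 ∧
      bandSet γ n = Set.Ico a (((n : ℝ) + 1) ^ 2)) ∧
    (γ < 0 → ∃ b : ℝ, (n : ℝ) ^ 2 < b ∧ b < ((n : ℝ) + 1) ^ 2 ∧
      bandSet γ n = Set.Ioc ((n : ℝ) ^ 2) b) ∧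
    (γ = 0 → bandSet γ n = Set.Ioo ((n : ℝ) ^ 2) (((n : ℝ) + 1) ^ 2)) ∧
    (γ ≠ 0 → ∃ c d : ℝ, c < d ∧
      (∀ x ∈ bandSet γ n, x ≤ c) ∧ (∀ y ∈ bandSet γ (n + 1), d ≤ y)) := by
  have hn' : 1 ≤ n + 1 := Nat.le_add_left 1 n
  refine ⟨fun hγ => bandA γ hγ n hn, fun hγ => bandB γ hγ n hn,
    fun hγ => by rw [hγ]; exact bandC n hn, ?_⟩
  intro hne
  rcases lt_or_gt_of_ne hne with hγ | hγ
  · obtain ⟨b, hb1, hb2, heq⟩ := bandB γ hγ n hn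
    refine ⟨b, ((n:ℝ) + 1) ^ 2, hb2, ?_, ?_⟩
    · intro x hx
      rw [show bandSet γ n = Set.Ioc ((n:ℝ)^2) b from heq] at hx
      exact hx.2
    · intro y hy
      have h1 : y ∈ Set.Ioo (((n+1 : ℕ) : ℝ) ^ 2) ((((n+1 : ℕ) : ℝ) + 1) ^ 2) := hy.1
      have := h1.1
      push_cast at this
      linarith
  · obtain ⟨a, ha1, ha2, heq⟩ := bandA γ hγ (n + 1) hn'
    refine ⟨((n:ℝ) + 1) ^ 2, a, ?_, ?_, ?_⟩
    · have := ha1; push_cast at this; linarith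
    · intro x hx
      exact hx.1.2.le
    · intro y hy
      rw [show bandSet γ (n + 1)
          = Set.Ico a ((((n+1 : ℕ) : ℝ) + 1) ^ 2) from heq] at hy
      exact hy.1
end

section
/- For γ ∈ ℝ, let I₀ = {z ∈ (−∞, 1) : |η(z)| ≤ 4}. Then: if γ > 0, I₀ = [a₀, 1) for some a₀ with 0 < a₀ < 1; if γ = 0, I₀ = [0, 1); if −8/π < γ < 0, I₀ = [a₀, b₀] with a₀ < 0 < b₀ < 1; if γ = −8/π, I₀ = [a₀, 0] with a₀ < 0; and if γ < −8/π, I₀ = [a₀, b₀] with a₀ < b₀ < 0. In particular 0 ∈ I₀ if and only if −8/π ≤ γ ≤ 0. -/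
open Real

/-- `I₀ = {z ∈ (−∞, 1) : |η(z)| ≤ 4}`. -/
noncomputable def bandSetZero (γ : ℝ) : Set ℝ :=
  {z : ℝ | z < 1 ∧ |eta γ z| ≤ 4}

section BandAuxSection
open Set

namespace BandAux

noncomputable def T (x : ℝ) : ℝ := x * Real.sin x / Real.cos x
noncomputable def C (x : ℝ) : ℝ := x * Real.cos x / Real.sin x
noncomputable def Th (x : ℝ) : ℝ := x * Real.sinh x / Real.cosh x
noncomputable def Ch (x : ℝ) : ℝ := x * Real.cosh x / Real.sinh x

lemma sincos_lt {x : ℝ} (hx : 0 < x) : Real.sin x * Real.cos x < x := by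
  have h1 := Real.sin_lt (show (0:ℝ) < 2 * x by linarith)
  have h2 := Real.sin_two_mul x
  nlinarith

lemma lt_sinhcosh {x : ℝ} (hx : 0 < x) : x < Real.sinh x * Real.cosh x := by
  have h1 : x < Real.sinh x := Real.self_lt_sinh_iff.2 hx
  have h2 : 1 ≤ Real.cosh x := Real.one_le_cosh x
  nlinarith

lemma mul_cos_lt_sin {x : ℝ} (h0 : 0 < x) (h2 : x < π/2) : x * Real.cos x < Real.sin x := by
  have ht := Real.lt_tan h0 h2
  have hc : 0 < Real.cos x := Real.cos_pos_of_mem_Ioo ⟨by linarith, h2⟩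
  rw [Real.tan_eq_sin_div_cos, lt_div_iff₀ hc] at ht
  linarith

lemma sinh_lt_mul_cosh {x : ℝ} (hx : 0 < x) : Real.sinh x < x * Real.cosh x := by
  have H : StrictMonoOn (fun y => y * Real.cosh y - Real.sinh y) (Ici 0) := by
    apply strictMonoOn_of_deriv_pos (convex_Ici 0)
    · exact ((continuous_id.mul Real.continuous_cosh).sub Real.continuous_sinh).continuousOn
    · intro y hy
      rw [interior_Ici] at hy
      have h : HasDerivAt (fun y => y * Real.cosh y - Real.sinh y)
          (1 * Real.cosh y + y * Real.sinh y - Real.cosh y) y :=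
        ((hasDerivAt_id y).mul (Real.hasDerivAt_cosh y)).sub (Real.hasDerivAt_sinh y)
      rw [h.deriv]
      have := Real.sinh_pos_iff.2 (mem_Ioi.1 hy)
      have := mem_Ioi.1 hy
      nlinarith
  have := H (self_mem_Ici) (le_of_lt hx : (0:ℝ) ≤ x) hx
  simp at this
  linarith

lemma sin_pos' {x : ℝ} (hx : x ∈ Ioo 0 (π/2)) : 0 < Real.sin x :=
  Real.sin_pos_of_pos_of_lt_pi hx.1 (by have := pi_pos; linarith [hx.2])

lemma cos_pos' {x : ℝ} (hx : x ∈ Ioo 0 (π/2)) : 0 < Real.cos x :=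
  Real.cos_pos_of_mem_Ioo ⟨by linarith [hx.1, pi_pos], hx.2⟩

lemma T_pos {x : ℝ} (hx : x ∈ Ioo 0 (π/2)) : 0 < T x := by
  have := sin_pos' hx; have := cos_pos' hx; have := hx.1
  unfold T; positivity

lemma C_pos {x : ℝ} (hx : x ∈ Ioo 0 (π/2)) : 0 < C x := by
  have := sin_pos' hx; have := cos_pos' hx; have := hx.1
  unfold C; positivity

lemma C_lt_one {x : ℝ} (hx : x ∈ Ioo 0 (π/2)) : C x < 1 := by
  have hs := sin_pos' hx
  have h := mul_cos_lt_sin hx.1 hx.2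
  unfold C
  rw [div_lt_one hs]
  linarith

lemma Th_pos {x : ℝ} (hx : 0 < x) : 0 < Th x := by
  have h1 : 0 < Real.sinh x := Real.sinh_pos_iff.2 hx
  have h2 : 0 < Real.cosh x := Real.cosh_pos x
  unfold Th; positivity

lemma Th_lt_self {x : ℝ} (hx : 0 < x) : Th x < x := by
  have h1 : Real.sinh x < Real.cosh x := Real.sinh_lt_cosh x
  have h2 : 0 < Real.cosh x := Real.cosh_pos x
  unfold Th
  rw [div_lt_iff₀ h2]
  nlinarith

lemma one_lt_Ch {x : ℝ} (hx : 0 < x) : 1 < Ch x := by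
  have h1 : 0 < Real.sinh x := Real.sinh_pos_iff.2 hx
  have h2 := sinh_lt_mul_cosh hx
  unfold Ch
  rw [lt_div_iff₀ h1]
  linarith

lemma self_lt_Ch {x : ℝ} (hx : 0 < x) : x < Ch x := by
  have h1 : 0 < Real.sinh x := Real.sinh_pos_iff.2 hx
  have h3 : Real.sinh x < Real.cosh x := Real.sinh_lt_cosh x
  unfold Ch
  rw [lt_div_iff₀ h1]
  nlinarith

lemma T_mono : StrictMonoOn T (Ioo 0 (π/2)) := by
  apply strictMonoOn_of_deriv_pos (convex_Ioo _ _)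
  · apply ContinuousOn.div ((continuous_id.mul Real.continuous_sin).continuousOn)
      Real.continuous_cos.continuousOn
    exact fun x hx => ne_of_gt (cos_pos' hx)
  · intro x hx
    rw [interior_Ioo] at hx
    have hc := cos_pos' hx
    have h : HasDerivAt T
        (((1 * Real.sin x + x * Real.cos x) * Real.cos x - x * Real.sin x * (-Real.sin x)) / Real.cos x ^ 2) x :=
      (((hasDerivAt_id x).mul (Real.hasDerivAt_sin x)).div (Real.hasDerivAt_cos x) (ne_of_gt hc))
    rw [h.deriv]
    have hss := Real.sin_sq_add_cos_sq x
    have hs := sin_pos' hx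
    have hx0 := hx.1
    have hnum : (1 * Real.sin x + x * Real.cos x) * Real.cos x - x * Real.sin x * (-Real.sin x)
        = Real.sin x * Real.cos x + x := by linear_combination x * hss
    rw [hnum]
    positivity

lemma C_anti : StrictAntiOn C (Ioo 0 (π/2)) := by
  apply strictAntiOn_of_deriv_neg (convex_Ioo _ _)
  · apply ContinuousOn.div ((continuous_id.mul Real.continuous_cos).continuousOn)
      Real.continuous_sin.continuousOn
    exact fun x hx => ne_of_gt (sin_pos' hx)
  · intro x hx
    rw [interior_Ioo] at hx
    have hs := sin_pos' hx
    have h : HasDerivAt C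
        (((1 * Real.cos x + x * (-Real.sin x)) * Real.sin x - x * Real.cos x * Real.cos x) / Real.sin x ^ 2) x :=
      (((hasDerivAt_id x).mul (Real.hasDerivAt_cos x)).div (Real.hasDerivAt_sin x) (ne_of_gt hs))
    rw [h.deriv]
    have hss := Real.sin_sq_add_cos_sq x
    have hlt := sincos_lt hx.1
    have hnum : (1 * Real.cos x + x * (-Real.sin x)) * Real.sin x - x * Real.cos x * Real.cos x
        = Real.sin x * Real.cos x - x := by linear_combination (-x) * hss
    rw [hnum]
    apply div_neg_of_neg_of_pos (by linarith) (by positivity)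

lemma Th_mono : StrictMonoOn Th (Ioi 0) := by
  apply strictMonoOn_of_deriv_pos (convex_Ioi _)
  · apply ContinuousOn.div ((continuous_id.mul Real.continuous_sinh).continuousOn)
      Real.continuous_cosh.continuousOn
    exact fun x _ => ne_of_gt (Real.cosh_pos x)
  · intro x hx
    rw [interior_Ioi] at hx
    have hc := Real.cosh_pos x
    have h : HasDerivAt Th
        (((1 * Real.sinh x + x * Real.cosh x) * Real.cosh x - x * Real.sinh x * Real.sinh x) / Real.cosh x ^ 2) x :=
      (((hasDerivAt_id x).mul (Real.hasDerivAt_sinh x)).div (Real.hasDerivAt_cosh x) (ne_of_gt hc))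
    rw [h.deriv]
    have hss := Real.cosh_sq_sub_sinh_sq x
    have hs := Real.sinh_pos_iff.2 (mem_Ioi.1 hx)
    have hx0 := mem_Ioi.1 hx
    have hnum : (1 * Real.sinh x + x * Real.cosh x) * Real.cosh x - x * Real.sinh x * Real.sinh x
        = Real.sinh x * Real.cosh x + x := by linear_combination x * hss
    rw [hnum]
    positivity

lemma Ch_mono : StrictMonoOn Ch (Ioi 0) := by
  apply strictMonoOn_of_deriv_pos (convex_Ioi _)
  · apply ContinuousOn.div ((continuous_id.mul Real.continuous_cosh).continuousOn)
      Real.continuous_sinh.continuousOn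
    exact fun x hx => ne_of_gt (Real.sinh_pos_iff.2 (mem_Ioi.1 hx))
  · intro x hx
    rw [interior_Ioi] at hx
    have hx0 := mem_Ioi.1 hx
    have hs := Real.sinh_pos_iff.2 hx0
    have h : HasDerivAt Ch
        (((1 * Real.cosh x + x * Real.sinh x) * Real.sinh x - x * Real.cosh x * Real.cosh x) / Real.sinh x ^ 2) x :=
      (((hasDerivAt_id x).mul (Real.hasDerivAt_cosh x)).div (Real.hasDerivAt_sinh x) (ne_of_gt hs))
    rw [h.deriv]
    have hss := Real.cosh_sq_sub_sinh_sq x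
    have hlt := lt_sinhcosh hx0
    have hnum : (1 * Real.cosh x + x * Real.sinh x) * Real.sinh x - x * Real.cosh x * Real.cosh x
        = Real.sinh x * Real.cosh x - x := by linear_combination (-x) * hss
    rw [hnum]
    exact div_pos (by linarith) (by positivity)


lemma T_contOn : ContinuousOn T (Ioo 0 (π/2)) := by
  apply ContinuousOn.div ((continuous_id.mul Real.continuous_sin).continuousOn)
    Real.continuous_cos.continuousOn
  exact fun x hx => ne_of_gt (cos_pos' hx)


lemma half_le_cos {x : ℝ} (h0 : 0 ≤ x) (h1 : x ≤ π/4) : 1/2 ≤ Real.cos x := by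
  have h2 : Real.cos (π/4) ≤ Real.cos x :=
    Real.cos_le_cos_of_nonneg_of_le_pi h0 (by linarith [pi_pos]) h1
  rw [Real.cos_pi_div_four] at h2
  have : (1:ℝ) ≤ Real.sqrt 2 := by
    rw [show (1:ℝ) = Real.sqrt 1 by simp]
    exact Real.sqrt_le_sqrt (by norm_num)
  linarith


lemma exists_T_eq {d : ℝ} (hd : 0 < d) : ∃ x ∈ Ioo 0 (π/2), T x = d := by
  have hπ := pi_pos
  set lo := min (π/8) (Real.sqrt d / 2) with hlo_def
  have hlo_pos : 0 < lo := lt_min (by linarith) (by positivity)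
  have hlo_le : lo ≤ π/8 := min_le_left _ _
  have hlo_sq : lo ^ 2 ≤ d / 4 := by
    have h1 : lo ≤ Real.sqrt d / 2 := min_le_right _ _
    have h2 : (Real.sqrt d / 2) ^ 2 = d / 4 := by
      rw [div_pow, Real.sq_sqrt hd.le]; norm_num
    nlinarith
  clear_value lo
  have hTlo : T lo < d := by
    have hcos : (1:ℝ)/2 ≤ Real.cos lo := half_le_cos hlo_pos.le (by linarith)
    have hsin : Real.sin lo < lo := Real.sin_lt hlo_pos
    rw [T, div_lt_iff₀ (by linarith)]
    nlinarith [Real.sin_pos_of_pos_of_lt_pi hlo_pos (by linarith)]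
  set δ := min (π/4) (π/(8*(d+1))) with hδ_def
  have hδ_pos : 0 < δ := lt_min (by linarith) (by positivity)
  have hδ1 : δ ≤ π/4 := min_le_left _ _
  have hδ2 : δ ≤ π/(8*(d+1)) := min_le_right _ _
  clear_value δ
  set hi := π/2 - δ with hhi_def
  have hhi1 : π/4 ≤ hi := by rw [hhi_def]; linarith
  have hhi2 : hi < π/2 := by rw [hhi_def]; linarith
  have hsinhi : (1:ℝ)/2 ≤ Real.sin hi := by
    have : Real.sin hi = Real.cos δ := by rw [hhi_def, Real.sin_pi_div_two_sub]
    rw [this]; exact half_le_cos hδ_pos.le hδ1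
  have hcoshi : Real.cos hi = Real.sin δ := by rw [hhi_def, Real.cos_pi_div_two_sub]
  clear_value hi
  have hcoshi_pos : 0 < Real.cos hi :=
    cos_pos' ⟨by linarith, hhi2⟩
  have hThi : d < T hi := by
    rw [T, lt_div_iff₀ hcoshi_pos, hcoshi]
    have hsinδ : Real.sin δ < δ := Real.sin_lt hδ_pos
    have h8 : d * δ ≤ d * (π/(8*(d+1))) := mul_le_mul_of_nonneg_left hδ2 hd.le
    have hd1 : (0:ℝ) < d + 1 := by linarith
    have e1 : π/(8*(d+1)) * (d+1) = π/8 := by field_simp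
    have h9 : d * (π/(8*(d+1))) < π/8 := by
      have hp : 0 < π/(8*(d+1)) := by positivity
      calc d * (π/(8*(d+1))) = π/(8*(d+1)) * d := by ring
        _ < π/(8*(d+1)) * (d+1) := by nlinarith
        _ = π/8 := e1
    have h10 : π/8 ≤ hi * Real.sin hi := by nlinarith
    have h11 : d * Real.sin δ ≤ d * δ := mul_le_mul_of_nonneg_left hsinδ.le hd.le
    linarith
  have hlohi : lo ≤ hi := by linarith
  have hsub : Icc lo hi ⊆ Ioo 0 (π/2) := fun x hx => ⟨lt_of_lt_of_le hlo_pos hx.1, lt_of_le_of_lt hx.2 hhi2⟩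
  have := intermediate_value_Icc hlohi (T_contOn.mono hsub)
  obtain ⟨x, hx, hxd⟩ := this ⟨hTlo.le, hThi.le⟩
  exact ⟨x, hsub hx, hxd⟩


lemma C_contOn : ContinuousOn C (Ioo 0 (π/2)) := by
  apply ContinuousOn.div ((continuous_id.mul Real.continuous_cos).continuousOn)
    Real.continuous_sin.continuousOn
  exact fun x hx => ne_of_gt (sin_pos' hx)


lemma Th_contOn : ContinuousOn Th (Ioi 0) := by
  apply ContinuousOn.div ((continuous_id.mul Real.continuous_sinh).continuousOn)
    Real.continuous_cosh.continuousOn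
  exact fun x _ => ne_of_gt (Real.cosh_pos x)


lemma Ch_contOn : ContinuousOn Ch (Ioi 0) := by
  apply ContinuousOn.div ((continuous_id.mul Real.continuous_cosh).continuousOn)
    Real.continuous_sinh.continuousOn
  exact fun x hx => ne_of_gt (Real.sinh_pos_iff.2 (mem_Ioi.1 hx))


lemma cosh_le_one_add_mul_sinh {x : ℝ} (hx : 0 ≤ x) : Real.cosh x ≤ 1 + x * Real.sinh x := by
  rcases eq_or_lt_of_le hx with h | h
  · simp [← h]
  have H : StrictMonoOn (fun y => 1 + y * Real.sinh y - Real.cosh y) (Ici 0) := by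
    apply strictMonoOn_of_deriv_pos (convex_Ici 0)
    · exact ((continuous_const.add (continuous_id.mul Real.continuous_sinh)).sub
        Real.continuous_cosh).continuousOn
    · intro y hy
      rw [interior_Ici] at hy
      have hd : HasDerivAt (fun y => 1 + y * Real.sinh y - Real.cosh y)
          (0 + (1 * Real.sinh y + y * Real.cosh y) - Real.sinh y) y :=
        ((hasDerivAt_const y 1).add ((hasDerivAt_id y).mul (Real.hasDerivAt_sinh y))).sub
          (Real.hasDerivAt_cosh y)
      rw [hd.deriv]
      have := Real.cosh_pos y
      have := mem_Ioi.1 hy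
      nlinarith
  have := H self_mem_Ici (mem_Ici.2 hx) h
  simp at this
  linarith


lemma exists_C_eq {c : ℝ} (h0 : 0 < c) (h1 : c < 1) : ∃ x ∈ Ioo 0 (π/2), C x = c := by
  have hπ := pi_pos
  set lo := min (π/4) (Real.sqrt (2*(1-c)) / 2) with hlo_def
  have hlo_pos : 0 < lo := lt_min (by linarith)
    (div_pos (Real.sqrt_pos.2 (by linarith)) two_pos)
  have hlo_le : lo ≤ π/4 := min_le_left _ _
  have hlo_sq : lo ^ 2 ≤ (1-c) / 2 := by
    have ha : lo ≤ Real.sqrt (2*(1-c)) / 2 := min_le_right _ _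
    have hb : (Real.sqrt (2*(1-c)) / 2) ^ 2 = (1-c)/2 := by
      rw [div_pow, Real.sq_sqrt (by linarith)]; ring
    nlinarith
  clear_value lo
  have hsinlo : 0 < Real.sin lo := sin_pos' ⟨hlo_pos, by linarith⟩
  have hClo : c < C lo := by
    have hcos_ge : 1 - lo^2/2 ≤ Real.cos lo := Real.one_sub_sq_div_two_le_cos
    have hcgt : c < Real.cos lo := by nlinarith
    have hsinlt : Real.sin lo < lo := Real.sin_lt hlo_pos
    rw [C, lt_div_iff₀ hsinlo]
    nlinarith
  set δ := min (π/4) (c/(2*π)) with hδ_def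
  have hδ_pos : 0 < δ := lt_min (by linarith) (by positivity)
  have hδ1 : δ ≤ π/4 := min_le_left _ _
  have hδ2 : δ ≤ c/(2*π) := min_le_right _ _
  clear_value δ
  set hi := π/2 - δ with hhi_def
  have hhi1 : π/4 ≤ hi := by rw [hhi_def]; linarith
  have hhi2 : hi < π/2 := by rw [hhi_def]; linarith
  have hsinhi : (1:ℝ)/2 ≤ Real.sin hi := by
    have e : Real.sin hi = Real.cos δ := by rw [hhi_def, Real.sin_pi_div_two_sub]
    rw [e]; exact half_le_cos hδ_pos.le hδ1
  have hcoshi : Real.cos hi = Real.sin δ := by rw [hhi_def, Real.cos_pi_div_two_sub]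
  clear_value hi
  have hsinhi_pos : 0 < Real.sin hi := by linarith
  have hChi : C hi < c := by
    rw [C, div_lt_iff₀ hsinhi_pos, hcoshi]
    have hsinδ : Real.sin δ < δ := Real.sin_lt hδ_pos
    have hsinδ_pos : 0 < Real.sin δ := sin_pos' ⟨hδ_pos, by linarith⟩
    have e2 : π/2 * (c/(2*π)) = c/4 := by field_simp; ring
    have h3 : hi * Real.sin δ ≤ (π/2) * Real.sin δ := by nlinarith [hsinδ_pos]
    have h4 : (π/2) * Real.sin δ ≤ (π/2) * δ := by nlinarith
    have h5 : (π/2) * δ ≤ (π/2) * (c/(2*π)) := by nlinarith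
    have h6 : c/4 < c * Real.sin hi := by nlinarith
    linarith
  have hlohi : lo ≤ hi := by linarith
  have hsub : Icc lo hi ⊆ Ioo 0 (π/2) := fun x hx =>
    ⟨lt_of_lt_of_le hlo_pos hx.1, lt_of_le_of_lt hx.2 hhi2⟩
  obtain ⟨x, hx, hxd⟩ := intermediate_value_Icc' hlohi (C_contOn.mono hsub) ⟨hChi.le, hClo.le⟩
  exact ⟨x, hsub hx, hxd⟩


lemma exists_Th_eq {c : ℝ} (hc : 0 < c) : ∃ x ∈ Ioi 0, Th x = c := by
  set lo := c/2 with hlo_def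
  have hlo_pos : 0 < lo := by positivity
  have hThlo : Th lo < c := by
    have h1 : Real.sinh lo < Real.cosh lo := Real.sinh_lt_cosh lo
    have h2 : 0 < Real.cosh lo := Real.cosh_pos lo
    have h3 : 0 < Real.sinh lo := Real.sinh_pos_iff.2 hlo_pos
    rw [Th, div_lt_iff₀ h2]
    nlinarith
  set hi := 2*c + 2 with hhi_def
  have hhi1 : (1:ℝ) ≤ hi := by rw [hhi_def]; linarith
  have hThi : c < Th hi := by
    have hcs : Real.cosh hi - Real.sinh hi = Real.exp (-hi) := Real.cosh_sub_sinh hi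
    have hexp : Real.exp (-hi) ≤ 1 := Real.exp_le_one_iff.2 (by linarith)
    have hs1 : Real.sinh 1 ≤ Real.sinh hi := Real.sinh_le_sinh.2 hhi1
    have hs2 : (1:ℝ) < Real.sinh 1 := Real.self_lt_sinh_iff.2 one_pos
    have hchp : 0 < Real.cosh hi := Real.cosh_pos hi
    rw [Th, lt_div_iff₀ hchp]
    nlinarith
  clear_value lo hi
  have hlohi : lo ≤ hi := by linarith
  have hsub : Icc lo hi ⊆ Ioi 0 := fun x hx => lt_of_lt_of_le hlo_pos hx.1
  obtain ⟨x, hx, hxd⟩ := intermediate_value_Icc hlohi (Th_contOn.mono hsub) ⟨hThlo.le, hThi.le⟩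
  exact ⟨x, hsub hx, hxd⟩


lemma exists_Ch_eq {c : ℝ} (hc : 1 < c) : ∃ x ∈ Ioi 0, Ch x = c := by
  set lo := min (1/2 : ℝ) (Real.sqrt (c-1) / 2) with hlo_def
  have hlo_pos : 0 < lo := lt_min (by norm_num)
    (div_pos (Real.sqrt_pos.2 (by linarith)) two_pos)
  have hlo_half : lo ≤ 1/2 := min_le_left _ _
  have hlo_sq : lo ^ 2 ≤ (c-1)/4 := by
    have ha : lo ≤ Real.sqrt (c-1) / 2 := min_le_right _ _
    have hb : (Real.sqrt (c-1) / 2) ^ 2 = (c-1)/4 := by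
      rw [div_pow, Real.sq_sqrt (by linarith)]; ring
    nlinarith
  clear_value lo
  have hsinh : 0 < Real.sinh lo := Real.sinh_pos_iff.2 hlo_pos
  have hChlo : Ch lo < c := by
    have h1 : Real.cosh lo ≤ 1 + lo * Real.sinh lo := cosh_le_one_add_mul_sinh hlo_pos.le
    have h2 : Real.sinh lo < lo * Real.cosh lo := sinh_lt_mul_cosh hlo_pos
    have h3 : 0 < Real.cosh lo := Real.cosh_pos lo
    have hslt : lo < Real.sinh lo := Real.self_lt_sinh_iff.2 hlo_pos
    have e1 : Real.cosh lo * (1 - lo^2) ≤ 1 := by nlinarith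
    have e2 : Real.cosh lo ≤ 4/3 := by nlinarith
    have e3 : Real.cosh lo < c := by nlinarith
    rw [Ch, div_lt_iff₀ hsinh]
    nlinarith
  have hChhi : c < Ch c := by
    have h1 : 0 < Real.sinh c := Real.sinh_pos_iff.2 (by linarith)
    have h2 : Real.sinh c < Real.cosh c := Real.sinh_lt_cosh c
    rw [Ch, lt_div_iff₀ h1]
    nlinarith
  have hlohi : lo ≤ c := by linarith
  have hsub : Icc lo c ⊆ Ioi 0 := fun x hx => lt_of_lt_of_le hlo_pos hx.1
  obtain ⟨x, hx, hxd⟩ := intermediate_value_Icc hlohi (Ch_contOn.mono hsub) ⟨hChlo.le, hChhi.le⟩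
  exact ⟨x, hsub hx, hxd⟩


lemma eta_zero (γ : ℝ) : eta γ 0 = γ * π + 4 := by simp [eta]


lemma sqrt_mem {z : ℝ} (h0 : 0 < z) (h1 : z < 1) :
    π * Real.sqrt z / 2 ∈ Ioo 0 (π/2) := by
  have hπ := pi_pos
  have hs0 : 0 < Real.sqrt z := Real.sqrt_pos.2 h0
  have hs1 : Real.sqrt z < 1 := by
    rw [show (1:ℝ) = Real.sqrt 1 by simp]
    exact Real.sqrt_lt_sqrt h0.le h1
  constructor
  · positivity
  · nlinarith


lemma eta_sub_four {γ z : ℝ} (h0 : 0 < z) :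
    eta γ z - 4 = (2 * Real.sin (π * Real.sqrt z / 2) / Real.sqrt z) *
      (γ * Real.cos (π * Real.sqrt z / 2) - 4 * Real.sqrt z * Real.sin (π * Real.sqrt z / 2)) := by
  rw [eta, if_pos h0]
  have hs : Real.sqrt z ≠ 0 := ne_of_gt (Real.sqrt_pos.2 h0)
  have h2 : π * Real.sqrt z = 2 * (π * Real.sqrt z / 2) := by ring
  rw [h2, Real.sin_two_mul, Real.cos_two_mul]
  have hpy := Real.sin_sq_add_cos_sq (π * Real.sqrt z / 2)
  field_simp
  linear_combination (8 * Real.sqrt z) * hpy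


lemma eta_add_four {γ z : ℝ} (h0 : 0 < z) :
    eta γ z + 4 = (2 * Real.cos (π * Real.sqrt z / 2) / Real.sqrt z) *
      (γ * Real.sin (π * Real.sqrt z / 2) + 4 * Real.sqrt z * Real.cos (π * Real.sqrt z / 2)) := by
  rw [eta, if_pos h0]
  have hs : Real.sqrt z ≠ 0 := ne_of_gt (Real.sqrt_pos.2 h0)
  have h2 : π * Real.sqrt z = 2 * (π * Real.sqrt z / 2) := by ring
  rw [h2, Real.sin_two_mul, Real.cos_two_mul]
  field_simp
  ring


lemma eta_sub_four_neg {γ z : ℝ} (h0 : z < 0) :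
    eta γ z - 4 = (2 * Real.sinh (π * Real.sqrt (-z) / 2) / Real.sqrt (-z)) *
      (γ * Real.cosh (π * Real.sqrt (-z) / 2) + 4 * Real.sqrt (-z) * Real.sinh (π * Real.sqrt (-z) / 2)) := by
  rw [eta, if_neg (by linarith), if_neg (by linarith)]
  have hs : Real.sqrt (-z) ≠ 0 := ne_of_gt (Real.sqrt_pos.2 (by linarith))
  have h2 : π * Real.sqrt (-z) = 2 * (π * Real.sqrt (-z) / 2) := by ring
  rw [h2, Real.sinh_two_mul, Real.cosh_two_mul]
  have hpy := Real.cosh_sq_sub_sinh_sq (π * Real.sqrt (-z) / 2)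
  field_simp
  linear_combination (4 * Real.sqrt (-z)) * hpy


lemma eta_add_four_neg {γ z : ℝ} (h0 : z < 0) :
    eta γ z + 4 = (2 * Real.cosh (π * Real.sqrt (-z) / 2) / Real.sqrt (-z)) *
      (γ * Real.sinh (π * Real.sqrt (-z) / 2) + 4 * Real.sqrt (-z) * Real.cosh (π * Real.sqrt (-z) / 2)) := by
  rw [eta, if_neg (by linarith), if_neg (by linarith)]
  have hs : Real.sqrt (-z) ≠ 0 := ne_of_gt (Real.sqrt_pos.2 (by linarith))
  have h2 : π * Real.sqrt (-z) = 2 * (π * Real.sqrt (-z) / 2) := by ring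
  rw [h2, Real.sinh_two_mul, Real.cosh_two_mul]
  have hpy := Real.cosh_sq_sub_sinh_sq (π * Real.sqrt (-z) / 2)
  field_simp
  linear_combination (-(4 * Real.sqrt (-z))) * hpy


lemma eta_le_four_iff_pos {γ z : ℝ} (h0 : 0 < z) (h1 : z < 1) :
    eta γ z ≤ 4 ↔ γ * π / 8 ≤ T (π * Real.sqrt z / 2) := by
  have hπ := pi_pos
  set s := Real.sqrt z with hs_def
  set x := π * s / 2 with hx_def
  have hs0 : 0 < s := Real.sqrt_pos.2 h0
  have hx := sqrt_mem h0 h1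
  have hsin := sin_pos' hx
  have hcos := cos_pos' hx
  have key := eta_sub_four (γ := γ) h0
  have hp : 0 < 2 * Real.sin x / s := by positivity
  have e : 4 * s * Real.sin x = 8/π * (x * Real.sin x) := by
    rw [hx_def]; field_simp; ring
  rw [T, le_div_iff₀ hcos]
  constructor
  · intro h
    have hq : γ * Real.cos x - 4 * s * Real.sin x ≤ 0 := by
      by_contra hc
      push_neg at hc
      nlinarith [mul_pos hp hc]
    rw [e] at hq
    have c1 : (π/8) * (8/π * (x * Real.sin x)) = x * Real.sin x := by field_simp
    have c2 := mul_le_mul_of_nonneg_left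
      (show γ * Real.cos x ≤ 8/π * (x * Real.sin x) by linarith)
      (show (0:ℝ) ≤ π/8 by positivity)
    nlinarith [c1, c2]
  · intro h
    have c1 : (8/π) * (γ * π / 8 * Real.cos x) = γ * Real.cos x := by field_simp
    have c2 := mul_le_mul_of_nonneg_left h (show (0:ℝ) ≤ 8/π by positivity)
    have hq : γ * Real.cos x - 4 * s * Real.sin x ≤ 0 := by
      rw [e]; nlinarith [c1, c2]
    nlinarith [mul_nonpos_of_nonneg_of_nonpos hp.le hq]


lemma eta_ge_neg_four_iff_pos {γ z : ℝ} (h0 : 0 < z) (h1 : z < 1) :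
    -4 ≤ eta γ z ↔ -(γ * π / 8) ≤ C (π * Real.sqrt z / 2) := by
  have hπ := pi_pos
  set s := Real.sqrt z with hs_def
  set x := π * s / 2 with hx_def
  have hs0 : 0 < s := Real.sqrt_pos.2 h0
  have hx := sqrt_mem h0 h1
  have hsin := sin_pos' hx
  have hcos := cos_pos' hx
  have key := eta_add_four (γ := γ) h0
  have hp : 0 < 2 * Real.cos x / s := by positivity
  have e : 4 * s * Real.cos x = 8/π * (x * Real.cos x) := by
    rw [hx_def]; field_simp; ring
  rw [C, le_div_iff₀ hsin]
  constructor
  · intro h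
    have hq : 0 ≤ γ * Real.sin x + 4 * s * Real.cos x := by
      by_contra hc
      push_neg at hc
      nlinarith [mul_pos hp (show 0 < -(γ * Real.sin x + 4 * s * Real.cos x) by linarith)]
    rw [e] at hq
    have c1 : (π/8) * (8/π * (x * Real.cos x)) = x * Real.cos x := by field_simp
    have c2 := mul_le_mul_of_nonneg_left
      (show -(γ * Real.sin x) ≤ 8/π * (x * Real.cos x) by linarith)
      (show (0:ℝ) ≤ π/8 by positivity)
    nlinarith [c1, c2]
  · intro h
    have c1 : (8/π) * (-(γ * π / 8) * Real.sin x) = -(γ * Real.sin x) := by field_simp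
    have c2 := mul_le_mul_of_nonneg_left h (show (0:ℝ) ≤ 8/π by positivity)
    have hq : 0 ≤ γ * Real.sin x + 4 * s * Real.cos x := by
      rw [e]; nlinarith [c1, c2]
    nlinarith [mul_nonneg hp.le hq]


lemma eta_le_four_iff_neg {γ z : ℝ} (h0 : z < 0) :
    eta γ z ≤ 4 ↔ Th (π * Real.sqrt (-z) / 2) ≤ -(γ * π / 8) := by
  have hπ := pi_pos
  set s := Real.sqrt (-z) with hs_def
  set x := π * s / 2 with hx_def
  have hs0 : 0 < s := Real.sqrt_pos.2 (by linarith)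
  have hx0 : 0 < x := by positivity
  have hsinh : 0 < Real.sinh x := Real.sinh_pos_iff.2 hx0
  have hcosh : 0 < Real.cosh x := Real.cosh_pos x
  have key := eta_sub_four_neg (γ := γ) h0
  have hp : 0 < 2 * Real.sinh x / s := by positivity
  have e : 4 * s * Real.sinh x = 8/π * (x * Real.sinh x) := by
    rw [hx_def]; field_simp; ring
  rw [Th, div_le_iff₀ hcosh]
  constructor
  · intro h
    have hq : γ * Real.cosh x + 4 * s * Real.sinh x ≤ 0 := by
      by_contra hc
      push_neg at hc
      nlinarith [mul_pos hp hc]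
    rw [e] at hq
    have c1 : (π/8) * (8/π * (x * Real.sinh x)) = x * Real.sinh x := by field_simp
    have c2 := mul_le_mul_of_nonneg_left
      (show 8/π * (x * Real.sinh x) ≤ -(γ * Real.cosh x) by linarith)
      (show (0:ℝ) ≤ π/8 by positivity)
    nlinarith [c1, c2]
  · intro h
    have c1 : (8/π) * (-(γ * π / 8) * Real.cosh x) = -(γ * Real.cosh x) := by field_simp
    have c2 := mul_le_mul_of_nonneg_left h (show (0:ℝ) ≤ 8/π by positivity)
    have hq : γ * Real.cosh x + 4 * s * Real.sinh x ≤ 0 := by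
      rw [e]; nlinarith [c1, c2]
    nlinarith [mul_nonpos_of_nonneg_of_nonpos hp.le hq]


lemma eta_ge_neg_four_iff_neg {γ z : ℝ} (h0 : z < 0) :
    -4 ≤ eta γ z ↔ -(γ * π / 8) ≤ Ch (π * Real.sqrt (-z) / 2) := by
  have hπ := pi_pos
  set s := Real.sqrt (-z) with hs_def
  set x := π * s / 2 with hx_def
  have hs0 : 0 < s := Real.sqrt_pos.2 (by linarith)
  have hx0 : 0 < x := by positivity
  have hsinh : 0 < Real.sinh x := Real.sinh_pos_iff.2 hx0
  have hcosh : 0 < Real.cosh x := Real.cosh_pos x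
  have key := eta_add_four_neg (γ := γ) h0
  have hp : 0 < 2 * Real.cosh x / s := by positivity
  have e : 4 * s * Real.cosh x = 8/π * (x * Real.cosh x) := by
    rw [hx_def]; field_simp; ring
  rw [Ch, le_div_iff₀ hsinh]
  constructor
  · intro h
    have hq : 0 ≤ γ * Real.sinh x + 4 * s * Real.cosh x := by
      by_contra hc
      push_neg at hc
      nlinarith [mul_pos hp (show 0 < -(γ * Real.sinh x + 4 * s * Real.cosh x) by linarith)]
    rw [e] at hq
    have c1 : (π/8) * (8/π * (x * Real.cosh x)) = x * Real.cosh x := by field_simp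
    have c2 := mul_le_mul_of_nonneg_left
      (show -(γ * Real.sinh x) ≤ 8/π * (x * Real.cosh x) by linarith)
      (show (0:ℝ) ≤ π/8 by positivity)
    nlinarith [c1, c2]
  · intro h
    have c1 : (8/π) * (-(γ * π / 8) * Real.sinh x) = -(γ * Real.sinh x) := by field_simp
    have c2 := mul_le_mul_of_nonneg_left h (show (0:ℝ) ≤ 8/π by positivity)
    have hq : 0 ≤ γ * Real.sinh x + 4 * s * Real.cosh x := by
      rw [e]; nlinarith [c1, c2]
    nlinarith [mul_nonneg hp.le hq]



lemma Th_lt_Ch {x : ℝ} (hx : 0 < x) : Th x < Ch x := by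
  have h1 : 0 < Real.sinh x := Real.sinh_pos_iff.2 hx
  have h2 : 0 < Real.cosh x := Real.cosh_pos x
  have h3 : Real.sinh x < Real.cosh x := Real.sinh_lt_cosh x
  rw [Th, Ch, div_lt_div_iff₀ h2 h1]
  nlinarith [mul_pos hx h1, mul_pos hx h2, mul_pos h1 h2]

lemma sq_map_lt_one {x₀ : ℝ} (hx₀ : x₀ ∈ Set.Ioo 0 (π/2)) : (2*x₀/π)^2 < 1 := by
  have hπ := pi_pos
  have h1 : 0 < 2*x₀/π := div_pos (by linarith [hx₀.1]) hπ
  have h2 : 2*x₀/π < 1 := by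
    rw [div_lt_one hπ]
    linarith [hx₀.2]
  nlinarith

lemma sq_map_pos {x₀ : ℝ} (hx₀ : 0 < x₀) : 0 < (2*x₀/π)^2 := by
  have hπ := pi_pos
  have h1 : 0 < 2*x₀/π := div_pos (by linarith) hπ
  positivity

lemma le_x_iff {x₀ z : ℝ} (hx₀ : 0 < x₀) (hz : 0 < z) :
    (2*x₀/π)^2 ≤ z ↔ x₀ ≤ π * Real.sqrt z / 2 := by
  have hπ := pi_pos
  have ht : 0 < 2*x₀/π := div_pos (by linarith) hπ
  have hsq : Real.sqrt ((2*x₀/π)^2) = 2*x₀/π := Real.sqrt_sq ht.le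
  have e1 : π/2 * (2*x₀/π) = x₀ := by field_simp
  constructor
  · intro h
    have h2 : 2*x₀/π ≤ Real.sqrt z := by
      rw [← hsq]; exact Real.sqrt_le_sqrt h
    have c2 := mul_le_mul_of_nonneg_left h2 (show (0:ℝ) ≤ π/2 by positivity)
    linarith [e1, c2]
  · intro h
    have h2 : 2*x₀/π ≤ Real.sqrt z := by
      have c2 := mul_le_mul_of_nonneg_left h (show (0:ℝ) ≤ 2/π by positivity)
      have e2 : 2/π * (π * Real.sqrt z / 2) = Real.sqrt z := by field_simp
      have e3 : 2/π * x₀ = 2*x₀/π := by ring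
      linarith
    have hz2 := Real.sq_sqrt hz.le
    nlinarith [Real.sqrt_nonneg z]

lemma x_le_iff {x₀ z : ℝ} (hx₀ : 0 < x₀) (hz : 0 < z) :
    z ≤ (2*x₀/π)^2 ↔ π * Real.sqrt z / 2 ≤ x₀ := by
  have hπ := pi_pos
  have ht : 0 < 2*x₀/π := div_pos (by linarith) hπ
  have hsq : Real.sqrt ((2*x₀/π)^2) = 2*x₀/π := Real.sqrt_sq ht.le
  have e1 : π/2 * (2*x₀/π) = x₀ := by field_simp
  constructor
  · intro h
    have h2 : Real.sqrt z ≤ 2*x₀/π := by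
      rw [← hsq]; exact Real.sqrt_le_sqrt h
    have c2 := mul_le_mul_of_nonneg_left h2 (show (0:ℝ) ≤ π/2 by positivity)
    linarith [e1, c2]
  · intro h
    have h2 : Real.sqrt z ≤ 2*x₀/π := by
      have c2 := mul_le_mul_of_nonneg_left h (show (0:ℝ) ≤ 2/π by positivity)
      have e2 : 2/π * (π * Real.sqrt z / 2) = Real.sqrt z := by field_simp
      have e3 : 2/π * x₀ = 2*x₀/π := by ring
      linarith
    have hz2 := Real.sq_sqrt hz.le
    nlinarith [Real.sqrt_nonneg z]

end BandAux
end BandAuxSection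

set_option maxHeartbeats 1600000 in
/-- Structure of `I₀ = {z < 1 : |η(z)| ≤ 4}` depending on `γ`: for `γ > 0`,
`I₀ = [a₀, 1)` with `0 < a₀ < 1`; for `γ = 0`, `I₀ = [0, 1)`; for `−8/π < γ < 0`,
`I₀ = [a₀, b₀]` with `a₀ < 0 < b₀ < 1`; for `γ = −8/π`, `I₀ = [a₀, 0]` with `a₀ < 0`; for
`γ < −8/π`, `I₀ = [a₀, b₀]` with `a₀ < b₀ < 0`. In particular `0 ∈ I₀ ↔ −8/π ≤ γ ≤ 0`. -/
theorem bandSetZero_structure (γ : ℝ) :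
    (0 < γ → ∃ a : ℝ, 0 < a ∧ a < 1 ∧ bandSetZero γ = Set.Ico a 1) ∧
    (γ = 0 → bandSetZero γ = Set.Ico 0 1) ∧
    (-8 / π < γ ∧ γ < 0 → ∃ a b : ℝ, a < 0 ∧ 0 < b ∧ b < 1 ∧
      bandSetZero γ = Set.Icc a b) ∧
    (γ = -8 / π → ∃ a : ℝ, a < 0 ∧ bandSetZero γ = Set.Icc a 0) ∧
    (γ < -8 / π → ∃ a b : ℝ, a < b ∧ b < 0 ∧ bandSetZero γ = Set.Icc a b) ∧
    ((0 : ℝ) ∈ bandSetZero γ ↔ -8 / π ≤ γ ∧ γ ≤ 0) := by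
  have hπ := Real.pi_pos
  refine ⟨?_, ?_, ?_, ?_, ?_, ?_⟩
  -- Case γ > 0
  · intro hγ
    obtain ⟨x₀, hx₀, hT⟩ := BandAux.exists_T_eq (show 0 < γ*π/8 by positivity)
    refine ⟨(2*x₀/π)^2, BandAux.sq_map_pos hx₀.1, BandAux.sq_map_lt_one hx₀, ?_⟩
    ext z
    simp only [bandSetZero, Set.mem_setOf_eq, Set.mem_Ico, abs_le]
    constructor
    · rintro ⟨hz1, hm4, h4⟩
      rcases lt_trichotomy z 0 with hneg | rfl | hpos
      · exfalso
        have h := (BandAux.eta_le_four_iff_neg hneg).1 h4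
        have hs : 0 < Real.sqrt (-z) := Real.sqrt_pos.2 (by linarith)
        have hxz : 0 < π * Real.sqrt (-z) / 2 := div_pos (mul_pos hπ hs) two_pos
        have := BandAux.Th_pos hxz
        nlinarith [mul_pos hγ hπ]
      · exfalso
        rw [BandAux.eta_zero] at h4
        nlinarith [mul_pos hγ hπ]
      · refine ⟨?_, hz1⟩
        have h := (BandAux.eta_le_four_iff_pos hpos hz1).1 h4
        by_contra hc
        push_neg at hc
        have hxlt : π * Real.sqrt z / 2 < x₀ := by
          have := (BandAux.x_le_iff hx₀.1 hpos).1 hc.le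
          rcases lt_or_eq_of_le this with h' | h'
          · exact h'
          · exfalso
            have := (BandAux.le_x_iff hx₀.1 hpos).2 (le_of_eq h'.symm)
            linarith
        have hlt := BandAux.T_mono (BandAux.sqrt_mem hpos hz1) hx₀ hxlt
        rw [hT] at hlt
        linarith
    · rintro ⟨haz, hz1⟩
      have hzpos : 0 < z := lt_of_lt_of_le (BandAux.sq_map_pos hx₀.1) haz
      refine ⟨hz1, ?_, ?_⟩
      · rw [BandAux.eta_ge_neg_four_iff_pos hzpos hz1]
        have := BandAux.C_pos (BandAux.sqrt_mem hzpos hz1)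
        nlinarith [mul_pos hγ hπ]
      · rw [BandAux.eta_le_four_iff_pos hzpos hz1]
        have hxge : x₀ ≤ π * Real.sqrt z / 2 := (BandAux.le_x_iff hx₀.1 hzpos).1 haz
        have := BandAux.T_mono.monotoneOn hx₀ (BandAux.sqrt_mem hzpos hz1) hxge
        linarith [hT ▸ this]
  -- Case γ = 0
  · intro hγ
    subst hγ
    ext z
    simp only [bandSetZero, Set.mem_setOf_eq, Set.mem_Ico, abs_le]
    constructor
    · rintro ⟨hz1, hm4, h4⟩
      refine ⟨?_, hz1⟩
      by_contra hc
      push_neg at hc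
      have h := (BandAux.eta_le_four_iff_neg hc).1 h4
      have hs : 0 < Real.sqrt (-z) := Real.sqrt_pos.2 (by linarith)
      have hxz : 0 < π * Real.sqrt (-z) / 2 := div_pos (mul_pos hπ hs) two_pos
      have := BandAux.Th_pos hxz
      simp at h
      linarith
    · rintro ⟨h0z, hz1⟩
      refine ⟨hz1, ?_, ?_⟩
      · rcases eq_or_lt_of_le h0z with h | hpos
        · rw [← h, BandAux.eta_zero]; linarith
        · rw [BandAux.eta_ge_neg_four_iff_pos hpos hz1]
          have := BandAux.C_pos (BandAux.sqrt_mem hpos hz1)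
          linarith
      · rcases eq_or_lt_of_le h0z with h | hpos
        · rw [← h, BandAux.eta_zero]; linarith
        · rw [BandAux.eta_le_four_iff_pos hpos hz1]
          have := BandAux.T_pos (BandAux.sqrt_mem hpos hz1)
          linarith
  -- Case -8/π < γ < 0
  · rintro ⟨hγ1, hγ2⟩
    have hγπ : -8 < γ * π := by
      rw [div_lt_iff₀ hπ] at hγ1
      linarith
    have hc0 : 0 < -(γ*π/8) := by nlinarith
    have hc1 : -(γ*π/8) < 1 := by linarith
    obtain ⟨x₁, hx₁, hC⟩ := BandAux.exists_C_eq hc0 hc1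
    obtain ⟨x₂, hx₂, hTh⟩ := BandAux.exists_Th_eq hc0
    have hx₂0 : 0 < x₂ := Set.mem_Ioi.1 hx₂
    refine ⟨-(2*x₂/π)^2, (2*x₁/π)^2, by nlinarith [BandAux.sq_map_pos hx₂0],
      BandAux.sq_map_pos hx₁.1, BandAux.sq_map_lt_one hx₁, ?_⟩
    ext z
    simp only [bandSetZero, Set.mem_setOf_eq, Set.mem_Icc, abs_le]
    constructor
    · rintro ⟨hz1, hm4, h4⟩
      rcases lt_trichotomy z 0 with hneg | rfl | hpos
      · have hnz : 0 < -z := by linarith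
        have h := (BandAux.eta_le_four_iff_neg hneg).1 h4
        have hxzIoi : π * Real.sqrt (-z) / 2 ∈ Set.Ioi (0:ℝ) := by
          have hs : 0 < Real.sqrt (-z) := Real.sqrt_pos.2 hnz
          exact Set.mem_Ioi.2 (div_pos (mul_pos hπ hs) two_pos)
        have hxle : π * Real.sqrt (-z) / 2 ≤ x₂ := by
          by_contra hgt
          push_neg at hgt
          have := BandAux.Th_mono hx₂ hxzIoi hgt
          rw [hTh] at this
          linarith
        have haz : -(2*x₂/π)^2 ≤ z := by
          have := (BandAux.x_le_iff hx₂0 hnz).2 hxle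
          linarith
        exact ⟨haz, by nlinarith [BandAux.sq_map_pos hx₁.1]⟩
      · exact ⟨by nlinarith [BandAux.sq_map_pos hx₂0], by positivity⟩
      · have h := (BandAux.eta_ge_neg_four_iff_pos hpos hz1).1 hm4
        have hzb : z ≤ (2*x₁/π)^2 := by
          by_contra hgt
          push_neg at hgt
          have hxgt : x₁ < π * Real.sqrt z / 2 := by
            by_contra hle
            push_neg at hle
            have := (BandAux.x_le_iff hx₁.1 hpos).2 hle
            linarith
          have := BandAux.C_anti hx₁ (BandAux.sqrt_mem hpos hz1) hxgt
          rw [hC] at this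
          linarith
        exact ⟨by nlinarith [BandAux.sq_map_pos hx₂0], hzb⟩
    · rintro ⟨haz, hzb⟩
      have hz1 : z < 1 := lt_of_le_of_lt hzb (BandAux.sq_map_lt_one hx₁)
      refine ⟨hz1, ?_, ?_⟩
      · rcases lt_trichotomy z 0 with hneg | rfl | hpos
        · rw [BandAux.eta_ge_neg_four_iff_neg hneg]
          have hs : 0 < Real.sqrt (-z) := Real.sqrt_pos.2 (by linarith)
          have hxz : 0 < π * Real.sqrt (-z) / 2 := div_pos (mul_pos hπ hs) two_pos
          have := BandAux.one_lt_Ch hxz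
          linarith
        · rw [BandAux.eta_zero]; linarith
        · rw [BandAux.eta_ge_neg_four_iff_pos hpos hz1]
          have hxle : π * Real.sqrt z / 2 ≤ x₁ := (BandAux.x_le_iff hx₁.1 hpos).1 hzb
          have := BandAux.C_anti.antitoneOn (BandAux.sqrt_mem hpos hz1) hx₁ hxle
          rw [hC] at this
          linarith
      · rcases lt_trichotomy z 0 with hneg | rfl | hpos
        · rw [BandAux.eta_le_four_iff_neg hneg]
          have hnz : 0 < -z := by linarith
          have hxle : π * Real.sqrt (-z) / 2 ≤ x₂ := by
            apply (BandAux.x_le_iff hx₂0 hnz).1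
            linarith
          have hxzIoi : π * Real.sqrt (-z) / 2 ∈ Set.Ioi (0:ℝ) := by
            have hs : 0 < Real.sqrt (-z) := Real.sqrt_pos.2 hnz
            exact Set.mem_Ioi.2 (div_pos (mul_pos hπ hs) two_pos)
          have := BandAux.Th_mono.monotoneOn hxzIoi hx₂ hxle
          rw [hTh] at this
          linarith
        · rw [BandAux.eta_zero]; linarith
        · rw [BandAux.eta_le_four_iff_pos hpos hz1]
          have := BandAux.T_pos (BandAux.sqrt_mem hpos hz1)
          nlinarith
  -- Case γ = -8/π
  · intro hγ
    have hc : -(γ*π/8) = 1 := by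
      rw [hγ]
      field_simp
    obtain ⟨x₂, hx₂, hTh⟩ := BandAux.exists_Th_eq (show (0:ℝ) < 1 by norm_num)
    have hx₂0 : 0 < x₂ := Set.mem_Ioi.1 hx₂
    refine ⟨-(2*x₂/π)^2, by nlinarith [BandAux.sq_map_pos hx₂0], ?_⟩
    ext z
    simp only [bandSetZero, Set.mem_setOf_eq, Set.mem_Icc, abs_le]
    have hγπ : γ * π = -8 := by
      rw [hγ]; field_simp
    constructor
    · rintro ⟨hz1, hm4, h4⟩
      rcases lt_trichotomy z 0 with hneg | rfl | hpos
      · have hnz : 0 < -z := by linarith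
        have h := (BandAux.eta_le_four_iff_neg hneg).1 h4
        rw [hc] at h
        have hxzIoi : π * Real.sqrt (-z) / 2 ∈ Set.Ioi (0:ℝ) := by
          have hs : 0 < Real.sqrt (-z) := Real.sqrt_pos.2 hnz
          exact Set.mem_Ioi.2 (div_pos (mul_pos hπ hs) two_pos)
        have hxle : π * Real.sqrt (-z) / 2 ≤ x₂ := by
          by_contra hgt
          push_neg at hgt
          have := BandAux.Th_mono hx₂ hxzIoi hgt
          rw [hTh] at this
          linarith
        have := (BandAux.x_le_iff hx₂0 hnz).2 hxle
        constructor <;> linarith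
      · exact ⟨by nlinarith [BandAux.sq_map_pos hx₂0], le_refl 0⟩
      · exfalso
        have h := (BandAux.eta_ge_neg_four_iff_pos hpos hz1).1 hm4
        rw [hc] at h
        have := BandAux.C_lt_one (BandAux.sqrt_mem hpos hz1)
        linarith
    · rintro ⟨haz, hz0⟩
      have hz1 : z < 1 := by linarith
      refine ⟨hz1, ?_, ?_⟩
      · rcases eq_or_lt_of_le hz0 with h | hneg
        · rw [h, BandAux.eta_zero]; linarith
        · rw [BandAux.eta_ge_neg_four_iff_neg hneg, hc]
          have hs : 0 < Real.sqrt (-z) := Real.sqrt_pos.2 (by linarith)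
          have hxz : 0 < π * Real.sqrt (-z) / 2 := div_pos (mul_pos hπ hs) two_pos
          exact (BandAux.one_lt_Ch hxz).le
      · rcases eq_or_lt_of_le hz0 with h | hneg
        · rw [h, BandAux.eta_zero]; linarith
        · rw [BandAux.eta_le_four_iff_neg hneg, hc]
          have hnz : 0 < -z := by linarith
          have hxle : π * Real.sqrt (-z) / 2 ≤ x₂ := by
            apply (BandAux.x_le_iff hx₂0 hnz).1
            linarith
          have hxzIoi : π * Real.sqrt (-z) / 2 ∈ Set.Ioi (0:ℝ) := by
            have hs : 0 < Real.sqrt (-z) := Real.sqrt_pos.2 hnz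
            exact Set.mem_Ioi.2 (div_pos (mul_pos hπ hs) two_pos)
          have := BandAux.Th_mono.monotoneOn hxzIoi hx₂ hxle
          rw [hTh] at this
          linarith
  -- Case γ < -8/π
  · intro hγ
    have hγπ : γ * π < -8 := by
      rw [lt_div_iff₀ hπ] at hγ
      linarith
    have hc1 : 1 < -(γ*π/8) := by linarith
    have hc0 : 0 < -(γ*π/8) := by linarith
    obtain ⟨x₂, hx₂, hTh⟩ := BandAux.exists_Th_eq hc0
    obtain ⟨x₃, hx₃, hCh⟩ := BandAux.exists_Ch_eq hc1
    have hx₂0 : 0 < x₂ := Set.mem_Ioi.1 hx₂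
    have hx₃0 : 0 < x₃ := Set.mem_Ioi.1 hx₃
    have hx32 : x₃ < x₂ := by
      by_contra hle
      push_neg at hle
      have h1 := BandAux.Th_lt_Ch hx₃0
      have h2 := BandAux.Th_mono.monotoneOn hx₂ hx₃ hle
      rw [hTh, hCh] at *
      linarith
    have hab : -(2*x₂/π)^2 < -(2*x₃/π)^2 := by
      have h2 : 0 < 2*x₂/π := div_pos (by linarith) hπ
      have h3 : 0 < 2*x₃/π := div_pos (by linarith) hπ
      have h4 : 2*x₃/π < 2*x₂/π := (div_lt_div_iff_of_pos_right hπ).2 (by linarith)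
      nlinarith
    refine ⟨-(2*x₂/π)^2, -(2*x₃/π)^2, hab, by nlinarith [BandAux.sq_map_pos hx₃0], ?_⟩
    ext z
    simp only [bandSetZero, Set.mem_setOf_eq, Set.mem_Icc, abs_le]
    constructor
    · rintro ⟨hz1, hm4, h4⟩
      rcases lt_trichotomy z 0 with hneg | rfl | hpos
      · have hnz : 0 < -z := by linarith
        have hxzIoi : π * Real.sqrt (-z) / 2 ∈ Set.Ioi (0:ℝ) := by
          have hs : 0 < Real.sqrt (-z) := Real.sqrt_pos.2 hnz
          exact Set.mem_Ioi.2 (div_pos (mul_pos hπ hs) two_pos)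
        constructor
        · have h := (BandAux.eta_le_four_iff_neg hneg).1 h4
          have hxle : π * Real.sqrt (-z) / 2 ≤ x₂ := by
            by_contra hgt
            push_neg at hgt
            have := BandAux.Th_mono hx₂ hxzIoi hgt
            rw [hTh] at this
            linarith
          have := (BandAux.x_le_iff hx₂0 hnz).2 hxle
          linarith
        · have h := (BandAux.eta_ge_neg_four_iff_neg hneg).1 hm4
          have hxge : x₃ ≤ π * Real.sqrt (-z) / 2 := by
            by_contra hlt
            push_neg at hlt
            have := BandAux.Ch_mono hxzIoi hx₃ hlt
            rw [hCh] at this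
            linarith
          have := (BandAux.le_x_iff hx₃0 hnz).2 hxge
          linarith
      · exfalso
        rw [BandAux.eta_zero] at hm4
        linarith
      · exfalso
        have h := (BandAux.eta_ge_neg_four_iff_pos hpos hz1).1 hm4
        have := BandAux.C_lt_one (BandAux.sqrt_mem hpos hz1)
        linarith
    · rintro ⟨haz, hzb⟩
      have hzneg : z < 0 := by nlinarith [BandAux.sq_map_pos hx₃0]
      have hnz : 0 < -z := by linarith
      have hz1 : z < 1 := by linarith
      have hxzIoi : π * Real.sqrt (-z) / 2 ∈ Set.Ioi (0:ℝ) := by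
        have hs : 0 < Real.sqrt (-z) := Real.sqrt_pos.2 hnz
        exact Set.mem_Ioi.2 (div_pos (mul_pos hπ hs) two_pos)
      refine ⟨hz1, ?_, ?_⟩
      · rw [BandAux.eta_ge_neg_four_iff_neg hzneg]
        have hxge : x₃ ≤ π * Real.sqrt (-z) / 2 := by
          apply (BandAux.le_x_iff hx₃0 hnz).1
          linarith
        have := BandAux.Ch_mono.monotoneOn hx₃ hxzIoi hxge
        rw [hCh] at this
        linarith
      · rw [BandAux.eta_le_four_iff_neg hzneg]
        have hxle : π * Real.sqrt (-z) / 2 ≤ x₂ := by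
          apply (BandAux.x_le_iff hx₂0 hnz).1
          linarith
        have := BandAux.Th_mono.monotoneOn hxzIoi hx₂ hxle
        rw [hTh] at this
        linarith
  -- 0 ∈ I₀ ↔ -8/π ≤ γ ≤ 0
  · simp only [bandSetZero, Set.mem_setOf_eq, BandAux.eta_zero, abs_le]
    constructor
    · rintro ⟨-, hm4, h4⟩
      constructor
      · rw [div_le_iff₀ hπ]
        linarith
      · by_contra hc
        push_neg at hc
        nlinarith [mul_pos hc hπ]
    · rintro ⟨h1, h2⟩
      rw [div_le_iff₀ hπ] at h1
      refine ⟨by norm_num, by linarith, ?_⟩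
      nlinarith
end

section
/- Let γ ≠ 0 and let n ≥ 1 be an integer. On the set I_n = {z ∈ (n², (n+1)²) : |η(z)| ≤ 4}, the function η is strictly monotone; in particular, η restricted to I_n is injective and is a homeomorphism from I_n onto its image η(I_n) ⊆ [−4, 4]. -/
open Real

open Set Filter Topology

/-! ### Auxiliary lemmas -/

section Slope

lemma my_slope_right {f : ℝ → ℝ} {d w c : ℝ} (hd : HasDerivAt f d w) (hd0 : d < 0)
    (hwc : w < c) (h : ∀ t ∈ Set.Ioc w c, f w < f t) : False := by
  have h2 : Tendsto (slope f w) (𝓝[≠] w) (𝓝 d) := hasDerivAt_iff_tendsto_slope.1 hd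
  have h3 : 𝓝[>] w ≤ 𝓝[≠] w := nhdsWithin_mono _ fun x hx => ne_of_gt hx
  have h1 : ∀ᶠ t in 𝓝[>] w, slope f w t < 0 := (h2.mono_left h3).eventually_lt_const hd0
  obtain ⟨t, ht1, ht2⟩ := (h1.and (eventually_mem_set.2 (Ioc_mem_nhdsGT hwc))).exists
  have : 0 < slope f w t := by
    rw [slope_def_field]
    exact div_pos (sub_pos.2 (h t ht2)) (sub_pos.2 ht2.1)
  linarith

lemma my_slope_left {f : ℝ → ℝ} {d w c : ℝ} (hd : HasDerivAt f d w) (hd0 : d < 0)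
    (hcw : c < w) (h : ∀ t ∈ Set.Ico c w, f t < f w) : False := by
  have h2 : Tendsto (slope f w) (𝓝[≠] w) (𝓝 d) := hasDerivAt_iff_tendsto_slope.1 hd
  have h3 : 𝓝[<] w ≤ 𝓝[≠] w := nhdsWithin_mono _ fun x hx => ne_of_lt hx
  have h1 : ∀ᶠ t in 𝓝[<] w, slope f w t < 0 := (h2.mono_left h3).eventually_lt_const hd0
  obtain ⟨t, ht1, ht2⟩ := (h1.and (eventually_mem_set.2 (Ico_mem_nhdsLT hcw))).exists
  have : 0 < slope f w t := by
    rw [slope_def_field]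
    exact div_pos_of_neg_of_neg (sub_neg.2 (h t ht2)) (sub_neg.2 ht2.2)
  linarith

end Slope

section Master
variable {a b : ℝ} {f D : ℝ → ℝ}

lemma my_no_up_cross (hf : ∀ z ∈ Set.Ioo a b, HasDerivAt f (D z) z)
    (hD : ∀ z ∈ Set.Ioo a b, |f z| ≤ 4 → D z < 0)
    {v p q : ℝ} (hv : |v| ≤ 4) (hp : p ∈ Set.Ioo a b) (hq : q ∈ Set.Ioo a b)
    (hpq : p < q) (h1 : f p ≤ v) (h2 : v < f q) : False := by
  have hsub : Set.Icc p q ⊆ Set.Ioo a b := fun t ht =>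
    ⟨lt_of_lt_of_le hp.1 ht.1, lt_of_le_of_lt ht.2 hq.2⟩
  have hcont : ContinuousOn f (Set.Icc p q) := fun t ht =>
    ((hf t (hsub ht)).continuousAt).continuousWithinAt
  have hTne : (Set.Icc p q ∩ f ⁻¹' {v}).Nonempty := by
    obtain ⟨t, ht, htv⟩ := intermediate_value_Icc (le_of_lt hpq) hcont ⟨h1, le_of_lt h2⟩
    exact ⟨t, ht, htv⟩
  have hTclosed : IsClosed (Set.Icc p q ∩ f ⁻¹' {v}) :=
    hcont.preimage_isClosed_of_isClosed isClosed_Icc isClosed_singleton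
  have hTcomp : IsCompact (Set.Icc p q ∩ f ⁻¹' {v}) :=
    isCompact_Icc.of_isClosed_subset hTclosed Set.inter_subset_left
  obtain ⟨w, hwT, hwub⟩ : ∃ w, w ∈ Set.Icc p q ∩ f ⁻¹' {v} ∧
      ∀ u ∈ Set.Icc p q ∩ f ⁻¹' {v}, u ≤ w :=
    ⟨_, hTcomp.sSup_mem hTne, fun u hu => le_csSup hTcomp.bddAbove hu⟩
  have hfw : f w = v := hwT.2
  have hwq : w < q := lt_of_le_of_ne hwT.1.2 (fun h => absurd (h ▸ hfw) (ne_of_gt h2))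
  have hclaim : ∀ t ∈ Set.Ioc w q, f w < f t := by
    intro t ht
    by_contra hle
    push_neg at hle
    have htpq : t ∈ Set.Icc p q := ⟨le_trans hwT.1.1 (le_of_lt ht.1), ht.2⟩
    rcases eq_or_lt_of_le hle with heq | hlt
    · exact absurd (hwub t ⟨htpq, heq.trans hfw⟩) (not_le.2 ht.1)
    · obtain ⟨u, hu, huv⟩ := intermediate_value_Icc ht.2
        (hcont.mono (Set.Icc_subset_Icc htpq.1 le_rfl)) ⟨le_of_lt (hlt.trans_le hfw.le), le_of_lt h2⟩
      have := hwub u ⟨⟨le_trans htpq.1 hu.1, hu.2⟩, huv⟩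
      exact absurd (lt_of_lt_of_le ht.1 hu.1) (not_lt.2 this)
  exact my_slope_right (hf w (hsub hwT.1)) (hD w (hsub hwT.1) (hfw ▸ hv)) hwq hclaim

lemma my_no_down_return (hf : ∀ z ∈ Set.Ioo a b, HasDerivAt f (D z) z)
    (hD : ∀ z ∈ Set.Ioo a b, |f z| ≤ 4 → D z < 0)
    {v p q : ℝ} (hv : |v| ≤ 4) (hp : p ∈ Set.Ioo a b) (hq : q ∈ Set.Ioo a b)
    (hpq : p < q) (h1 : f p < v) (h2 : v ≤ f q) : False := by
  have hsub : Set.Icc p q ⊆ Set.Ioo a b := fun t ht =>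
    ⟨lt_of_lt_of_le hp.1 ht.1, lt_of_le_of_lt ht.2 hq.2⟩
  have hcont : ContinuousOn f (Set.Icc p q) := fun t ht =>
    ((hf t (hsub ht)).continuousAt).continuousWithinAt
  have hTne : (Set.Icc p q ∩ f ⁻¹' {v}).Nonempty := by
    obtain ⟨t, ht, htv⟩ := intermediate_value_Icc (le_of_lt hpq) hcont ⟨le_of_lt h1, h2⟩
    exact ⟨t, ht, htv⟩
  have hTclosed : IsClosed (Set.Icc p q ∩ f ⁻¹' {v}) :=
    hcont.preimage_isClosed_of_isClosed isClosed_Icc isClosed_singleton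
  have hTcomp : IsCompact (Set.Icc p q ∩ f ⁻¹' {v}) :=
    isCompact_Icc.of_isClosed_subset hTclosed Set.inter_subset_left
  obtain ⟨w, hwT, hwlb⟩ : ∃ w, w ∈ Set.Icc p q ∩ f ⁻¹' {v} ∧
      ∀ u ∈ Set.Icc p q ∩ f ⁻¹' {v}, w ≤ u :=
    ⟨_, hTcomp.sInf_mem hTne, fun u hu => csInf_le hTcomp.bddBelow hu⟩
  have hfw : f w = v := hwT.2
  have hpw : p < w := lt_of_le_of_ne hwT.1.1 (fun h => absurd (h ▸ hfw) (ne_of_lt h1))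
  have hclaim : ∀ t ∈ Set.Ico p w, f t < f w := by
    intro t ht
    by_contra hle
    push_neg at hle
    have htpq : t ∈ Set.Icc p q := ⟨ht.1, le_trans (le_of_lt ht.2) hwT.1.2⟩
    rcases eq_or_lt_of_le hle with heq | hlt
    · exact absurd (hwlb t ⟨htpq, (heq.symm.trans hfw)⟩) (not_le.2 ht.2)
    · obtain ⟨u, hu, huv⟩ := intermediate_value_Icc ht.1
        (hcont.mono (Set.Icc_subset_Icc le_rfl htpq.2)) ⟨le_of_lt h1, le_of_lt (hfw ▸ hlt)⟩
      have := hwlb u ⟨⟨hu.1, le_trans hu.2 htpq.2⟩, huv⟩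
      exact absurd (lt_of_le_of_lt hu.2 ht.2) (not_lt.2 this)
  exact my_slope_left (hf w (hsub hwT.1)) (hD w (hsub hwT.1) (hfw ▸ hv)) hpw hclaim

lemma my_master (hf : ∀ z ∈ Set.Ioo a b, HasDerivAt f (D z) z)
    (hD : ∀ z ∈ Set.Ioo a b, |f z| ≤ 4 → D z < 0) :
    StrictAntiOn f {z | z ∈ Set.Ioo a b ∧ |f z| ≤ 4} ∧
    Set.OrdConnected {z | z ∈ Set.Ioo a b ∧ |f z| ≤ 4} := by
  constructor
  · intro x hx y hy hxy
    by_contra hle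
    push_neg at hle
    rcases lt_or_eq_of_le hle with hlt | heq
    · exact my_no_up_cross hf hD hx.2 hx.1 hy.1 hxy le_rfl hlt
    · by_cases hconst : ∀ t ∈ Set.Icc x y, f t = f x
      · set m := (x + y) / 2 with hm
        have hm1 : x < m := by simp only [hm]; linarith
        have hm2 : m < y := by simp only [hm]; linarith
        have hmab : m ∈ Set.Ioo a b := ⟨lt_trans hx.1.1 hm1, lt_trans hm2 hy.1.2⟩
        have hev : f =ᶠ[𝓝 m] fun _ => f x :=
          eventually_of_mem (Icc_mem_nhds hm1 hm2) (fun t ht => hconst t ht)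
        have h0 : HasDerivAt f 0 m := (hasDerivAt_const m (f x)).congr_of_eventuallyEq hev
        have hDm : D m = 0 := (hf m hmab).unique h0
        have : D m < 0 := hD m hmab (by rw [hconst m ⟨le_of_lt hm1, le_of_lt hm2⟩]; exact hx.2)
        linarith
      · push_neg at hconst
        obtain ⟨t, ht, htne⟩ := hconst
        have htab : t ∈ Set.Ioo a b :=
          ⟨lt_of_lt_of_le hx.1.1 ht.1, lt_of_le_of_lt ht.2 hy.1.2⟩
        rcases lt_or_gt_of_ne htne with hlt | hgt
        · have hty : t < y :=
            lt_of_le_of_ne ht.2 (by rintro rfl; rw [heq] at hlt; exact lt_irrefl _ hlt)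
          exact my_no_down_return hf hD hy.2 htab hy.1 hty (heq ▸ hlt) le_rfl
        · have hxt : x < t := lt_of_le_of_ne ht.1 (by rintro rfl; exact lt_irrefl _ hgt)
          exact my_no_up_cross hf hD hx.2 hx.1 htab hxt le_rfl hgt
  · constructor
    rintro x hx y hy z hz
    have hzab : z ∈ Set.Ioo a b :=
      ⟨lt_of_lt_of_le hx.1.1 hz.1, lt_of_le_of_lt hz.2 hy.1.2⟩
    refine ⟨hzab, ?_⟩
    by_contra habs
    push_neg at habs
    rcases lt_abs.mp habs with h | h
    · have hxz : x < z := lt_of_le_of_ne hz.1 (by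
        rintro rfl
        exact absurd (abs_le.1 hx.2).2 (not_le.2 h))
      exact my_no_up_cross hf hD (by norm_num : |(4:ℝ)| ≤ 4) hx.1 hzab hxz (abs_le.1 hx.2).2 h
    · have hfz : f z < -4 := by linarith
      have hzy : z < y := lt_of_le_of_ne hz.2 (by
        rintro rfl
        exact absurd (abs_le.1 hy.2).1 (not_le.2 hfz))
      exact my_no_down_return hf hD (by norm_num : |(-4:ℝ)| ≤ 4) hzab hy.1 hzy hfz
        (abs_le.1 hy.2).1

end Master

section Pack

lemma my_pack {S : Set ℝ} {f : ℝ → ℝ} (hS : S.OrdConnected) (hmono : StrictMonoOn f S)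
    (hcont : ContinuousOn f S) :
    ∃ e : S ≃ₜ (f '' S : Set ℝ), ∀ x : S, (e x : ℝ) = f (x : ℝ) := by
  have himg : (f '' S).OrdConnected := by
    constructor
    rintro _ ⟨x, hx, rfl⟩ _ ⟨y, hy, rfl⟩ v hv
    rcases lt_or_ge y x with h | h
    · exact absurd (hv.1.trans hv.2) (not_le.2 (hmono hy hx h))
    · have hsub : Set.Icc x y ⊆ S := hS.out hx hy
      obtain ⟨t, ht, htv⟩ := intermediate_value_Icc h (hcont.mono hsub) hv
      exact ⟨t, hsub ht, htv⟩
  haveI : S.OrdConnected := hS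
  haveI : (f '' S : Set ℝ).OrdConnected := himg
  exact ⟨(hmono.orderIso f S).toHomeomorph, fun x => rfl⟩

lemma my_packAnti {S : Set ℝ} {f : ℝ → ℝ} (hS : S.OrdConnected) (hanti : StrictAntiOn f S)
    (hcont : ContinuousOn f S) :
    ∃ e : S ≃ₜ (f '' S : Set ℝ), ∀ x : S, (e x : ℝ) = f (x : ℝ) := by
  have hmono : StrictMonoOn (fun z => -(f z)) S := fun x hx y hy hxy =>
    neg_lt_neg (hanti hx hy hxy)
  obtain ⟨e₁, he₁⟩ := my_pack hS hmono (hcont.neg)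
  have himg : (fun y : ℝ => -y) '' ((fun z => -(f z)) '' S) = f '' S := by
    rw [Set.image_image]; simp
  let e₂ := (Homeomorph.neg ℝ).image ((fun z => -(f z)) '' S)
  refine ⟨(e₁.trans e₂).trans (Homeomorph.setCongr (by simpa using himg)), fun x => ?_⟩
  have h1 : (e₁ x : ℝ) = -(f x) := he₁ x
  show -((e₁ x : ℝ)) = f x
  rw [h1, neg_neg]

end Pack

section EtaDeriv

/-- The derivative of `eta γ` at `z > 0`. -/
noncomputable def Dfun (γ z : ℝ) : ℝ :=
  (γ*π*Real.cos (π*Real.sqrt z)*Real.sqrt z - γ*Real.sin (π*Real.sqrt z)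
    - 4*π*Real.sin (π*Real.sqrt z)*(Real.sqrt z)^2) / (2*(Real.sqrt z)^3)

lemma eta_hasDerivAt (γ : ℝ) {z : ℝ} (hz : 0 < z) : HasDerivAt (eta γ) (Dfun γ z) z := by
  have hs : 0 < Real.sqrt z := Real.sqrt_pos.2 hz
  have hsq : HasDerivAt Real.sqrt (1/(2*Real.sqrt z)) z := Real.hasDerivAt_sqrt (ne_of_gt hz)
  have h1 : HasDerivAt (fun t => π * Real.sqrt t) (π * (1/(2*Real.sqrt z))) z := hsq.const_mul π
  have hsin : HasDerivAt (fun t => Real.sin (π * Real.sqrt t))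
      (Real.cos (π*Real.sqrt z) * (π*(1/(2*Real.sqrt z)))) z :=
    (Real.hasDerivAt_sin (π*Real.sqrt z)).comp z (h := fun t => π * Real.sqrt t) h1
  have hcos : HasDerivAt (fun t => Real.cos (π * Real.sqrt t))
      (-Real.sin (π*Real.sqrt z) * (π*(1/(2*Real.sqrt z)))) z :=
    (Real.hasDerivAt_cos (π*Real.sqrt z)).comp z (h := fun t => π * Real.sqrt t) h1
  have hnum : HasDerivAt (fun t => γ * Real.sin (π * Real.sqrt t))
      (γ * (Real.cos (π*Real.sqrt z) * (π*(1/(2*Real.sqrt z))))) z := hsin.const_mul γ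
  have hdiv := hnum.div hsq (ne_of_gt hs)
  have hsum := hdiv.add (hcos.const_mul 4)
  have heq : eta γ =ᶠ[𝓝 z]
      fun t => γ * Real.sin (π*Real.sqrt t)/Real.sqrt t + 4*Real.cos (π*Real.sqrt t) := by
    filter_upwards [Ioi_mem_nhds hz] with t ht
    simp only [eta, if_pos (show (0:ℝ) < t from ht)]
  have hfinal := hsum.congr_of_eventuallyEq heq
  refine hfinal.congr_deriv (Eq.symm ?_)
  have hz2 : Real.sqrt z ^ 2 = z := Real.sq_sqrt hz.le
  rw [Dfun]
  field_simp
  ring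

lemma key_ineq {γ s a b : ℝ} (hs : 1 < s) (hab : a^2 + b^2 = 1) (ha : a ≠ 0)
    (hC : (γ*a + 4*b*s)^2 ≤ 16*s^2) :
    a * (γ*π*b*s - γ*a - 4*π*a*s^2) < 0 := by
  have hb : b^2 = 1 - a^2 := by linarith
  have hC' : γ^2*a^2 + 8*γ*a*b*s ≤ 16*a^2*s^2 := by nlinarith [hC, hb]
  have ha2 : 0 < a^2 := by positivity
  have hπ : (3:ℝ) < π := Real.pi_gt_three
  have hπC := mul_le_mul_of_nonneg_left hC' (le_of_lt Real.pi_pos)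
  have h1 : 1 < π^2 * s^2 := by
    nlinarith [mul_lt_mul_of_pos_left hs (lt_trans one_pos hs), sq_nonneg (π - 3), sq_nonneg s]
  nlinarith [hπC, sq_nonneg (a*(π*γ+4)), mul_lt_mul_of_pos_left h1 ha2, ha2]

lemma sin_sign (n : ℕ) {s : ℝ} (h1 : (n:ℝ) < s) (h2 : s < (n:ℝ) + 1) :
    0 < (-1:ℝ)^n * Real.sin (π * s) := by
  have hrw : π * s = π * (s - n) + n * π := by ring
  rw [hrw, Real.sin_add_nat_mul_pi]
  have hpos : 0 < Real.sin (π * (s - n)) := by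
    apply Real.sin_pos_of_pos_of_lt_pi
    · have : (0:ℝ) < s - n := by linarith
      positivity
    · nlinarith [Real.pi_pos]
  calc (0:ℝ) < (-1)^n * ((-1)^n * Real.sin (π * (s-n))) := by
        rw [← mul_assoc, ← pow_add]
        simpa [pow_mul] using by positivity
    _ = (-1)^n * ((-1)^n * Real.sin (π*(s-n))) := rfl

lemma Dsign (γ : ℝ) (n : ℕ) (hn : 1 ≤ n) {z : ℝ}
    (hz : z ∈ Set.Ioo ((n:ℝ)^2) (((n:ℝ)+1)^2)) (hband : |eta γ z| ≤ 4) :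
    Real.sin (π * Real.sqrt z) * Dfun γ z < 0 := by
  have hn1 : (1:ℝ) ≤ n := by exact_mod_cast hn
  have hz0 : (0:ℝ) < z := by nlinarith [hz.1]
  have hs : 0 < Real.sqrt z := Real.sqrt_pos.2 hz0
  have hns : (n:ℝ) < Real.sqrt z := (Real.lt_sqrt (by positivity)).2 hz.1
  have hsn1 : Real.sqrt z < (n:ℝ)+1 := (Real.sqrt_lt' (by positivity)).2 hz.2
  have hs1 : (1:ℝ) < Real.sqrt z := lt_of_le_of_lt hn1 hns
  set s := Real.sqrt z with hsdef
  set A := Real.sin (π*s) with hA'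
  set B := Real.cos (π*s) with hB'
  have hab : A^2 + B^2 = 1 := Real.sin_sq_add_cos_sq _
  have hsign := sin_sign n hns hsn1
  have hA : A ≠ 0 := by
    intro h
    rw [← hA', h, mul_zero] at hsign
    exact lt_irrefl _ hsign
  have hetaz : eta γ z = γ*A/s + 4*B := by
    rw [eta, if_pos hz0]
  rw [hetaz] at hband
  have habs := abs_le.1 hband
  have h4 : (γ*A/s + 4*B)^2 ≤ 16 := by nlinarith [habs.1, habs.2]
  have hC : (γ*A + 4*B*s)^2 ≤ 16*s^2 := by
    have heq : γ*A + 4*B*s = (γ*A/s + 4*B)*s := by field_simp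
    rw [heq, mul_pow]
    nlinarith [sq_nonneg s, h4]
  have hkey := key_ineq hs1 hab hA hC
  have hDfun : Dfun γ z = (γ*π*B*s - γ*A - 4*π*A*s^2)/(2*s^3) := rfl
  rw [hDfun, ← mul_div_assoc]
  exact div_neg_of_neg_of_pos (by nlinarith [hkey]) (by positivity)

end EtaDeriv

/-- For `γ ≠ 0` and `n ≥ 1`, `η` is strictly monotone on
`I_n = {z ∈ (n², (n+1)²) : |η(z)| ≤ 4}`; in particular it is injective on `I_n` and a
homeomorphism from `I_n` onto its image `η(I_n) ⊆ [−4, 4]`. -/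
theorem eta_strictly_monotone_on_bandSet (γ : ℝ) (hγ : γ ≠ 0) (n : ℕ) (hn : 1 ≤ n) :
    (StrictMonoOn (eta γ) (bandSet γ n) ∨ StrictAntiOn (eta γ) (bandSet γ n)) ∧
    Set.InjOn (eta γ) (bandSet γ n) ∧
    eta γ '' bandSet γ n ⊆ Set.Icc (-4 : ℝ) 4 ∧
    ∃ e : bandSet γ n ≃ₜ (eta γ '' bandSet γ n : Set ℝ),
      ∀ x : bandSet γ n, (e x : ℝ) = eta γ (x : ℝ) := by
  have hn1 : (1:ℝ) ≤ n := by exact_mod_cast hn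
  have hpos : ∀ z ∈ Set.Ioo ((n:ℝ)^2) (((n:ℝ)+1)^2), (0:ℝ) < z := by
    intro z hz
    nlinarith [hz.1]
  have hf : ∀ z ∈ Set.Ioo ((n:ℝ)^2) (((n:ℝ)+1)^2), HasDerivAt (eta γ) (Dfun γ z) z :=
    fun z hz => eta_hasDerivAt γ (hpos z hz)
  have hSdef : bandSet γ n
      = {z | z ∈ Set.Ioo ((n:ℝ)^2) (((n:ℝ)+1)^2) ∧ |eta γ z| ≤ 4} := rfl
  have hsinlt : ∀ z ∈ Set.Ioo ((n:ℝ)^2) (((n:ℝ)+1)^2),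
      0 < (-1:ℝ)^n * Real.sin (π * Real.sqrt z) := by
    intro z hz
    have hz0 := hpos z hz
    exact sin_sign n ((Real.lt_sqrt (by positivity)).2 hz.1)
      ((Real.sqrt_lt' (by positivity)).2 hz.2)
  have hcont : ContinuousOn (eta γ) (bandSet γ n) := fun z hz =>
    (hf z hz.1).continuousAt.continuousWithinAt
  -- image ⊆ [-4,4]
  have himg4 : eta γ '' bandSet γ n ⊆ Set.Icc (-4 : ℝ) 4 := by
    rintro _ ⟨z, hz, rfl⟩
    exact Set.mem_Icc.2 (abs_le.1 hz.2)
  rcases Nat.even_or_odd n with he | ho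
  · -- n even : sin > 0, Dfun < 0, eta strictly decreasing
    have hD : ∀ z ∈ Set.Ioo ((n:ℝ)^2) (((n:ℝ)+1)^2), |eta γ z| ≤ 4 → Dfun γ z < 0 := by
      intro z hz hb
      have h1 := Dsign γ n hn hz hb
      have h2 := hsinlt z hz
      rw [he.neg_one_pow, one_mul] at h2
      nlinarith
    obtain ⟨hanti, hconn⟩ := my_master hf hD
    rw [← hSdef] at hanti hconn
    obtain ⟨e, he'⟩ := my_packAnti hconn hanti hcont
    exact ⟨Or.inr hanti, hanti.injOn, himg4, e, he'⟩
  · -- n odd : sin < 0, Dfun > 0, eta strictly increasing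
    have hD : ∀ z ∈ Set.Ioo ((n:ℝ)^2) (((n:ℝ)+1)^2), |(fun t => -(eta γ t)) z| ≤ 4 →
        (fun t => -(Dfun γ t)) z < 0 := by
      intro z hz hb
      simp only [abs_neg] at hb
      have h1 := Dsign γ n hn hz hb
      have h2 := hsinlt z hz
      rw [ho.neg_one_pow] at h2
      simp only
      nlinarith
    have hf' : ∀ z ∈ Set.Ioo ((n:ℝ)^2) (((n:ℝ)+1)^2),
        HasDerivAt (fun t => -(eta γ t)) ((fun t => -(Dfun γ t)) z) z :=
      fun z hz => (hf z hz).neg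
    obtain ⟨hanti, hconn⟩ := my_master hf' hD
    have hset : {z | z ∈ Set.Ioo ((n:ℝ)^2) (((n:ℝ)+1)^2) ∧ |(fun t => -(eta γ t)) z| ≤ 4}
        = bandSet γ n := by
      ext z
      simp [bandSet, abs_neg]
    rw [hset] at hanti hconn
    have hmono : StrictMonoOn (eta γ) (bandSet γ n) := by
      intro x hx y hy hxy
      have := hanti hx hy hxy
      simpa using this
    obtain ⟨e, he'⟩ := my_pack hconn hmono hcont
    exact ⟨Or.inl hmono, hmono.injOn, himg4, e, he'⟩
end
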